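/- arXiv:2306.04355 — 2 statements merged into one kernel-verified Lean document; each statement's English description precedes it below -/
import Mathlib

section
/- Let {X_k} be a stationary m-dependent sequence in a sub-linear expectation space with E[X_1] = e[X_1] = 0, E[X_1²] < ∞, and E[(X_1² - c)⁺] → 0 as c → ∞. Then there exist constants 0 ≤ σ̲² ≤ σ̄² < ∞ such that E[S_n²]/n → σ̄² and e[S_n²]/n → σ̲², where S_n = X_1 + ... + X_n. -/
open Filter Finset

/-- A sub-linear expectation on the space of all real random variables on `Ω`. -/
structure SLE (Ω : Type*) where
  E : (Ω → ℝ) → ℝ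
  mono : ∀ X Y : Ω → ℝ, (∀ ω, X ω ≤ Y ω) → E X ≤ E Y
  const : ∀ c : ℝ, E (fun _ => c) = c
  subadd : ∀ X Y : Ω → ℝ, E (X + Y) ≤ E X + E Y
  homog : ∀ (l : ℝ) (X : Ω → ℝ), 0 ≤ l → E (l • X) = l * E X

/-- The conjugate (lower) expectation. -/
def SLE.e {Ω : Type*} (ℰ : SLE Ω) (X : Ω → ℝ) : ℝ := - ℰ.E (-X)

/-- The class `C_{l,Lip}` of test functions on `ℝ^a × ℝ^b`. -/
def ClLipV {a b : ℕ} (φ : (Fin a → ℝ) → (Fin b → ℝ) → ℝ) : Prop :=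
  ∃ (C : ℝ) (m : ℕ), 0 < C ∧
    ∀ (x₁ : Fin a → ℝ) (y₁ : Fin b → ℝ) (x₂ : Fin a → ℝ) (y₂ : Fin b → ℝ),
      |φ x₁ y₁ - φ x₂ y₂| ≤
        C * (1 + (‖x₁‖ + ‖y₁‖) ^ m + (‖x₂‖ + ‖y₂‖) ^ m) * (‖x₁ - x₂‖ + ‖y₁ - y₂‖)

/-- The class `C_{l,Lip}(ℝ^a)` of one-vector test functions. -/
def ClLipN {a : ℕ} (φ : (Fin a → ℝ) → ℝ) : Prop :=
  ∃ (C : ℝ) (m : ℕ), 0 < C ∧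
    ∀ x y : Fin a → ℝ, |φ x - φ y| ≤ C * (1 + ‖x‖ ^ m + ‖y‖ ^ m) * ‖x - y‖

/-- The random vector `Y` is independent of the random vector `X` under `ℰ`. -/
def IndepVec {Ω : Type*} (ℰ : SLE Ω) {a b : ℕ}
    (Y : Fin b → Ω → ℝ) (X : Fin a → Ω → ℝ) : Prop :=
  ∀ φ : (Fin a → ℝ) → (Fin b → ℝ) → ℝ, ClLipV φ →
    ℰ.E (fun ω => φ (fun i => X i ω) (fun j => Y j ω)) =
      ℰ.E (fun ω => ℰ.E (fun ω' => φ (fun i => X i ω) (fun j => Y j ω')))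

/-- The finite sequence `X_1, …, X_K` is `m`-dependent: for every `n` and `j ≥ m+1`,
`(X_{n+m+1},…,X_{n+j})` is independent of `(X_1,…,X_n)`. -/
def MDepFin {Ω : Type*} (ℰ : SLE Ω) (m : ℕ) (X : ℕ → Ω → ℝ) (K : ℕ) : Prop :=
  ∀ n j : ℕ, m + 1 ≤ j → n + j ≤ K →
    IndepVec ℰ (fun i : Fin (j - m) => X (n + m + 1 + i)) (fun i : Fin n => X (i + 1))

/-- The infinite sequence `X_1, X_2, …` is `m`-dependent. -/
def MDepSeq {Ω : Type*} (ℰ : SLE Ω) (m : ℕ) (X : ℕ → Ω → ℝ) : Prop :=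
  ∀ n j : ℕ, m + 1 ≤ j →
    IndepVec ℰ (fun i : Fin (j - m) => X (n + m + 1 + i)) (fun i : Fin n => X (i + 1))

/-- The sequence `X_1, X_2, …` is stationary:
`(X_1,…,X_n) ≐ (X_{1+p},…,X_{n+p})` for all `n, p`. -/
def StationarySeq {Ω : Type*} (ℰ : SLE Ω) (X : ℕ → Ω → ℝ) : Prop :=
  ∀ n p : ℕ, ∀ φ : (Fin n → ℝ) → ℝ, ClLipN φ →
    ℰ.E (fun ω => φ (fun i => X (i + 1) ω)) =
      ℰ.E (fun ω => φ (fun i => X (i + 1 + p) ω))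

section Basics

variable {Ω : Type} (ℰ : SLE Ω)

lemma E_mono {P Q : Ω → ℝ} (h : ∀ ω, P ω ≤ Q ω) : ℰ.E P ≤ ℰ.E Q := ℰ.mono P Q h

lemma E_congr {P Q : Ω → ℝ} (h : ∀ ω, P ω = Q ω) : ℰ.E P = ℰ.E Q := by
  have : P = Q := funext h; rw [this]

lemma E_subadd (P Q : Ω → ℝ) : ℰ.E (fun ω => P ω + Q ω) ≤ ℰ.E P + ℰ.E Q := ℰ.subadd P Q

lemma E_smul (c : ℝ) (hc : 0 ≤ c) (P : Ω → ℝ) :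
    ℰ.E (fun ω => c * P ω) = c * ℰ.E P := ℰ.homog c P hc

lemma E_neg_eq (P : Ω → ℝ) : ℰ.E (fun ω => -(P ω)) = - ℰ.e P := by
  have : ℰ.e P = - ℰ.E (fun ω => -(P ω)) := rfl
  linarith

lemma e_le_E (P : Ω → ℝ) : ℰ.e P ≤ ℰ.E P := by
  have h0 : (0:ℝ) = ℰ.E (fun _ => (0:ℝ)) := (ℰ.const 0).symm
  have h1 : ℰ.E (fun ω => P ω + (-(P ω))) ≤ ℰ.E P + ℰ.E (fun ω => -(P ω)) := E_subadd ℰ _ _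
  have h2 : ℰ.E (fun ω => P ω + (-(P ω))) = 0 := by
    rw [E_congr ℰ (Q := fun _ => (0:ℝ)) (by intro ω; ring)]; exact ℰ.const 0
  have h3 := E_neg_eq ℰ P
  linarith

lemma E_add_const (P : Ω → ℝ) (c : ℝ) : ℰ.E (fun ω => P ω + c) = ℰ.E P + c := by
  have h1 : ℰ.E (fun ω => P ω + c) ≤ ℰ.E P + c := by
    have := E_subadd ℰ P (fun _ => c); rwa [ℰ.const c] at this
  have h2 : ℰ.E P ≤ ℰ.E (fun ω => P ω + c) + (-c) := by
    have := E_subadd ℰ (fun ω => P ω + c) (fun _ => -c)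
    rw [ℰ.const (-c)] at this
    calc ℰ.E P = ℰ.E (fun ω => (P ω + c) + (-c)) := E_congr ℰ (by intro ω; ring)
    _ ≤ _ := this
  linarith

lemma E_superadd (P Q : Ω → ℝ) : ℰ.E P + ℰ.e Q ≤ ℰ.E (fun ω => P ω + Q ω) := by
  have h := E_subadd ℰ (fun ω => P ω + Q ω) (fun ω => -(Q ω))
  have h2 : ℰ.E (fun ω => (P ω + Q ω) + (-(Q ω))) = ℰ.E P := E_congr ℰ (by intro ω; ring)
  rw [E_neg_eq ℰ Q] at h
  rw [h2] at h; linarith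

lemma e_congr {P Q : Ω → ℝ} (h : ∀ ω, P ω = Q ω) : ℰ.e P = ℰ.e Q := by
  have : P = Q := funext h; rw [this]

lemma e_eq (P : Ω → ℝ) : ℰ.e P = - ℰ.E (fun ω => -(P ω)) := by
  have := E_neg_eq ℰ P; linarith

lemma e_mono {P Q : Ω → ℝ} (h : ∀ ω, P ω ≤ Q ω) : ℰ.e P ≤ ℰ.e Q := by
  rw [e_eq, e_eq]
  have := E_mono ℰ (P := fun ω => -(Q ω)) (Q := fun ω => -(P ω)) (fun ω => neg_le_neg (h ω))
  linarith

lemma e_superadd (P Q : Ω → ℝ) : ℰ.e P + ℰ.e Q ≤ ℰ.e (fun ω => P ω + Q ω) := by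
  rw [e_eq, e_eq, e_eq]
  have := E_subadd ℰ (fun ω => -(P ω)) (fun ω => -(Q ω))
  have h2 : ℰ.E (fun ω => -(P ω + Q ω)) ≤ ℰ.E (fun ω => -(P ω)) + ℰ.E (fun ω => -(Q ω)) := by
    refine le_trans (le_of_eq (E_congr ℰ ?_)) this
    intro ω; ring
  linarith

lemma e_subadd (P Q : Ω → ℝ) : ℰ.e (fun ω => P ω + Q ω) ≤ ℰ.e P + ℰ.E Q := by
  rw [e_eq, e_eq]
  have h := E_subadd ℰ (fun ω => -(P ω + Q ω)) Q
  have h2 : ℰ.E (fun ω => -(P ω + Q ω) + Q ω) = ℰ.E (fun ω => -(P ω)) := E_congr ℰ (by intro ω; ring)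
  rw [h2] at h
  linarith

lemma e_add_const (P : Ω → ℝ) (c : ℝ) : ℰ.e (fun ω => P ω + c) = ℰ.e P + c := by
  rw [e_eq, e_eq]
  have : ℰ.E (fun ω => -(P ω + c)) = ℰ.E (fun ω => -(P ω)) + (-c) := by
    rw [show (fun ω => -(P ω + c)) = (fun ω => (-(P ω)) + (-c)) from funext (by intro ω; ring)]
    exact E_add_const ℰ _ _
  rw [this]; ring

lemma e_smul (c : ℝ) (hc : 0 ≤ c) (P : Ω → ℝ) :
    ℰ.e (fun ω => c * P ω) = c * ℰ.e P := by
  rw [e_eq, e_eq]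
  have : ℰ.E (fun ω => -(c * P ω)) = c * ℰ.E (fun ω => -(P ω)) := by
    rw [show (fun ω => -(c * P ω)) = (fun ω => c * (-(P ω))) from funext (by intro ω; ring)]
    exact E_smul ℰ c hc _
  rw [this]; ring

lemma E_smul_neg (c : ℝ) (hc : c ≤ 0) (P : Ω → ℝ) :
    ℰ.E (fun ω => c * P ω) = c * ℰ.e P := by
  rw [e_eq]
  have : ℰ.E (fun ω => c * P ω) = ℰ.E (fun ω => (-c) * (-(P ω))) := E_congr ℰ (by intro ω; ring)
  rw [this, E_smul ℰ (-c) (by linarith) _]; ring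

lemma e_smul_neg (c : ℝ) (hc : c ≤ 0) (P : Ω → ℝ) :
    ℰ.e (fun ω => c * P ω) = c * ℰ.E P := by
  rw [e_eq]
  have : ℰ.E (fun ω => -(c * P ω)) = (-c) * ℰ.E P := by
    rw [show (fun ω => -(c * P ω)) = (fun ω => (-c) * P ω) from funext (by intro ω; ring)]
    exact E_smul ℰ (-c) (by linarith) _
  rw [this]; ring

lemma E_nonneg {P : Ω → ℝ} (h : ∀ ω, 0 ≤ P ω) : 0 ≤ ℰ.E P := by
  have := E_mono ℰ (P := fun _ => (0:ℝ)) (Q := P) h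
  rwa [ℰ.const 0] at this

lemma e_nonneg {P : Ω → ℝ} (h : ∀ ω, 0 ≤ P ω) : 0 ≤ ℰ.e P := by
  rw [e_eq]
  have : ℰ.E (fun ω => -(P ω)) ≤ ℰ.E (fun _ => (0:ℝ)) :=
    E_mono ℰ (by intro ω; linarith [h ω])
  rw [ℰ.const 0] at this; linarith

lemma E_sum_le {ι : Type*} (s : Finset ι) (f : ι → Ω → ℝ) :
    ℰ.E (fun ω => ∑ i ∈ s, f i ω) ≤ ∑ i ∈ s, ℰ.E (f i) := by
  classical
  induction s using Finset.induction_on with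
  | empty => simp [ℰ.const 0]
  | @insert a s' h ih =>
    rw [Finset.sum_insert h]
    calc ℰ.E (fun ω => ∑ i ∈ insert a s', f i ω)
        = ℰ.E (fun ω => f a ω + ∑ i ∈ s', f i ω) := E_congr ℰ (by intro ω; rw [Finset.sum_insert h])
      _ ≤ ℰ.E (f a) + ℰ.E (fun ω => ∑ i ∈ s', f i ω) := E_subadd ℰ _ _
      _ ≤ _ := by linarith

lemma e_sum_ge {ι : Type*} (s : Finset ι) (f : ι → Ω → ℝ) :
    ∑ i ∈ s, ℰ.e (f i) ≤ ℰ.e (fun ω => ∑ i ∈ s, f i ω) := by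
  classical
  induction s using Finset.induction_on with
  | empty =>
    simp only [Finset.sum_empty]
    rw [e_eq]; simp only [neg_zero]; rw [ℰ.const 0]; norm_num
  | @insert a s' h ih =>
    calc ∑ i ∈ insert a s', ℰ.e (f i) = ℰ.e (f a) + ∑ i ∈ s', ℰ.e (f i) := Finset.sum_insert h
      _ ≤ ℰ.e (f a) + ℰ.e (fun ω => ∑ i ∈ s', f i ω) := by linarith
      _ ≤ ℰ.e (fun ω => f a ω + ∑ i ∈ s', f i ω) := e_superadd ℰ _ _
      _ = _ := e_congr ℰ (fun ω => (Finset.sum_insert (f := fun i => f i ω) h).symm)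

end Basics

section TIneq

variable {Ω : Type} (ℰ : SLE Ω)

lemma sq_add_le_pt (u v t : ℝ) (ht : 0 < t) :
    (u + v)^2 ≤ (1+t) * u^2 + (1+1/t) * v^2 := by
  have h : 0 ≤ (t*u - v)^2 / t := div_nonneg (sq_nonneg _) ht.le
  have ht' : t ≠ 0 := ne_of_gt ht
  have expand : (t*u - v)^2 / t = t*u^2 - 2*u*v + v^2/t := by
    field_simp; ring
  have : 2*u*v ≤ t*u^2 + v^2/t := by nlinarith [h, expand]
  have hv : v^2/t = (1/t) * v^2 := by ring
  nlinarith

lemma sq_add_ge_pt (u v t : ℝ) (ht : 0 < t) :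
    (1-t) * u^2 - (1/t-1) * v^2 ≤ (u + v)^2 := by
  have h : 0 ≤ (t*u + v)^2 / t := div_nonneg (sq_nonneg _) ht.le
  have expand : (t*u + v)^2 / t = t*u^2 + 2*u*v + v^2/t := by
    field_simp; ring
  have : -(2*u*v) ≤ t*u^2 + v^2/t := by nlinarith [h, expand]
  have hv : v^2/t = (1/t) * v^2 := by ring
  nlinarith

lemma E_sq_split_le (U V : Ω → ℝ) (t : ℝ) (ht : 0 < t) :
    ℰ.E (fun ω => (U ω + V ω)^2) ≤
      (1+t) * ℰ.E (fun ω => (U ω)^2) + (1+1/t) * ℰ.E (fun ω => (V ω)^2) := by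
  have h1 : ℰ.E (fun ω => (U ω + V ω)^2) ≤
      ℰ.E (fun ω => (1+t) * (U ω)^2 + (1+1/t) * (V ω)^2) :=
    E_mono ℰ (fun ω => sq_add_le_pt _ _ t ht)
  have h2 := E_subadd ℰ (fun ω => (1+t) * (U ω)^2) (fun ω => (1+1/t) * (V ω)^2)
  have h3 := E_smul ℰ (1+t) (by positivity) (fun ω => (U ω)^2)
  have h4 := E_smul ℰ (1+1/t) (by positivity) (fun ω => (V ω)^2)
  linarith

lemma E_sq_split_ge (U V : Ω → ℝ) (t : ℝ) (ht : 0 < t) (ht1 : t ≤ 1) :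
    (1-t) * ℰ.E (fun ω => (U ω)^2) - (1/t-1) * ℰ.E (fun ω => (V ω)^2) ≤
      ℰ.E (fun ω => (U ω + V ω)^2) := by
  have h1 : ℰ.E (fun ω => (1-t) * (U ω)^2 + (-(1/t-1)) * (V ω)^2) ≤
      ℰ.E (fun ω => (U ω + V ω)^2) :=
    E_mono ℰ (fun ω => by have := sq_add_ge_pt (U ω) (V ω) t ht; nlinarith)
  have h2 := E_superadd ℰ (fun ω => (1-t) * (U ω)^2) (fun ω => (-(1/t-1)) * (V ω)^2)
  have h3 := E_smul ℰ (1-t) (by linarith) (fun ω => (U ω)^2)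
  have h4 : ℰ.e (fun ω => (-(1/t-1)) * (V ω)^2) = (-(1/t-1)) * ℰ.E (fun ω => (V ω)^2) := by
    apply e_smul_neg
    have : 1 ≤ 1/t := by rw [le_div_iff₀ ht]; linarith
    linarith
  linarith

lemma e_sq_split_le (U V : Ω → ℝ) (t : ℝ) (ht : 0 < t) :
    ℰ.e (fun ω => (U ω + V ω)^2) ≤
      (1+t) * ℰ.e (fun ω => (U ω)^2) + (1+1/t) * ℰ.E (fun ω => (V ω)^2) := by
  have h1 : ℰ.e (fun ω => (U ω + V ω)^2) ≤
      ℰ.e (fun ω => (1+t) * (U ω)^2 + (1+1/t) * (V ω)^2) :=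
    e_mono ℰ (fun ω => sq_add_le_pt _ _ t ht)
  have h2 := e_subadd ℰ (fun ω => (1+t) * (U ω)^2) (fun ω => (1+1/t) * (V ω)^2)
  have h3 := e_smul ℰ (1+t) (by positivity) (fun ω => (U ω)^2)
  have h4 := E_smul ℰ (1+1/t) (by positivity) (fun ω => (V ω)^2)
  linarith

lemma e_sq_split_ge (U V : Ω → ℝ) (t : ℝ) (ht : 0 < t) (ht1 : t ≤ 1) :
    (1-t) * ℰ.e (fun ω => (U ω)^2) - (1/t-1) * ℰ.E (fun ω => (V ω)^2) ≤
      ℰ.e (fun ω => (U ω + V ω)^2) := by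
  have h1 : ℰ.e (fun ω => (1-t) * (U ω)^2 + (-(1/t-1)) * (V ω)^2) ≤
      ℰ.e (fun ω => (U ω + V ω)^2) :=
    e_mono ℰ (fun ω => by have := sq_add_ge_pt (U ω) (V ω) t ht; nlinarith)
  have h2 := e_superadd ℰ (fun ω => (1-t) * (U ω)^2) (fun ω => (-(1/t-1)) * (V ω)^2)
  have h3 := e_smul ℰ (1-t) (by linarith) (fun ω => (U ω)^2)
  have h4 : ℰ.e (fun ω => (-(1/t-1)) * (V ω)^2) = (-(1/t-1)) * ℰ.E (fun ω => (V ω)^2) := by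
    apply e_smul_neg
    have : 1 ≤ 1/t := by rw [le_div_iff₀ ht]; linarith
    linarith
  linarith

/-- Fixed-scalar expansion: if `E[B] = e[B] = 0` then `E[(a+B)²] = a² + E[B²]`. -/
lemma E_fix (B : Ω → ℝ) (hB : ℰ.E B = 0) (hB' : ℰ.e B = 0) (a : ℝ) :
    ℰ.E (fun ω => (a + B ω)^2) = a^2 + ℰ.E (fun ω => (B ω)^2) := by
  have hlin : ∀ c : ℝ, ℰ.E (fun ω => c * B ω) = 0 ∧ ℰ.e (fun ω => c * B ω) = 0 := by
    intro c
    rcases le_or_gt 0 c with hc | hc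
    · constructor
      · rw [E_smul ℰ c hc, hB]; ring
      · rw [e_smul ℰ c hc, hB']; ring
    · constructor
      · rw [E_smul_neg ℰ c hc.le, hB']; ring
      · rw [e_smul_neg ℰ c hc.le, hB]; ring
  have hup : ℰ.E (fun ω => (a + B ω)^2) ≤ a^2 + ℰ.E (fun ω => (B ω)^2) := by
    have h1 : ℰ.E (fun ω => (a + B ω)^2) =
        ℰ.E (fun ω => ((B ω)^2 + a^2) + (2*a) * B ω) := E_congr ℰ (fun ω => by ring)
    have h2 := E_subadd ℰ (fun ω => (B ω)^2 + a^2) (fun ω => (2*a) * B ω)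
    have h3 := E_add_const ℰ (fun ω => (B ω)^2) (a^2)
    have h4 := (hlin (2*a)).1
    linarith
  have hdn : a^2 + ℰ.E (fun ω => (B ω)^2) ≤ ℰ.E (fun ω => (a + B ω)^2) := by
    have h1 : ℰ.E (fun ω => ((B ω)^2 + a^2) + (2*a) * B ω) =
        ℰ.E (fun ω => (a + B ω)^2) := E_congr ℰ (fun ω => by ring)
    have h2 := E_superadd ℰ (fun ω => (B ω)^2 + a^2) (fun ω => (2*a) * B ω)
    have h3 := E_add_const ℰ (fun ω => (B ω)^2) (a^2)
    have h4 := (hlin (2*a)).2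
    linarith
  linarith

lemma e_fix (B : Ω → ℝ) (hB : ℰ.E B = 0) (hB' : ℰ.e B = 0) (a : ℝ) :
    ℰ.e (fun ω => (a + B ω)^2) = a^2 + ℰ.e (fun ω => (B ω)^2) := by
  have hlin : ∀ c : ℝ, ℰ.E (fun ω => c * B ω) = 0 ∧ ℰ.e (fun ω => c * B ω) = 0 := by
    intro c
    rcases le_or_gt 0 c with hc | hc
    · constructor
      · rw [E_smul ℰ c hc, hB]; ring
      · rw [e_smul ℰ c hc, hB']; ring
    · constructor
      · rw [E_smul_neg ℰ c hc.le, hB']; ring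
      · rw [e_smul_neg ℰ c hc.le, hB]; ring
  have hup : ℰ.e (fun ω => (a + B ω)^2) ≤ a^2 + ℰ.e (fun ω => (B ω)^2) := by
    have h1 : ℰ.e (fun ω => (a + B ω)^2) =
        ℰ.e (fun ω => ((B ω)^2 + a^2) + (2*a) * B ω) := e_congr ℰ (fun ω => by ring)
    have h2 := e_subadd ℰ (fun ω => (B ω)^2 + a^2) (fun ω => (2*a) * B ω)
    have h3 := e_add_const ℰ (fun ω => (B ω)^2) (a^2)
    have h4 := (hlin (2*a)).1
    linarith
  have hdn : a^2 + ℰ.e (fun ω => (B ω)^2) ≤ ℰ.e (fun ω => (a + B ω)^2) := by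
    have h1 : ℰ.e (fun ω => ((B ω)^2 + a^2) + (2*a) * B ω) =
        ℰ.e (fun ω => (a + B ω)^2) := e_congr ℰ (fun ω => by ring)
    have h2 := e_superadd ℰ (fun ω => (B ω)^2 + a^2) (fun ω => (2*a) * B ω)
    have h3 := e_add_const ℰ (fun ω => (B ω)^2) (a^2)
    have h4 := (hlin (2*a)).2
    linarith
  linarith

end TIneq

section Lip

lemma sum_bound_fin {b : ℕ} (y : Fin b → ℝ) : |∑ j, y j| ≤ b * ‖y‖ := by
  calc |∑ j, y j| ≤ ∑ j, |y j| := Finset.abs_sum_le_sum_abs _ _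
    _ ≤ ∑ _j : Fin b, ‖y‖ := Finset.sum_le_sum (fun j _ => by
        have := norm_le_pi_norm y j; simpa [Real.norm_eq_abs] using this)
    _ = b * ‖y‖ := by simp [Finset.sum_const, Finset.card_univ, nsmul_eq_mul]

lemma gs_bound {n : ℕ} (s : Finset ℕ) (x : Fin n → ℝ) :
    |∑ i : Fin n, (if (i:ℕ)+1 ∈ s then x i else 0)| ≤ n * ‖x‖ := by
  calc |∑ i : Fin n, (if (i:ℕ)+1 ∈ s then x i else 0)|
      ≤ ∑ i : Fin n, |if (i:ℕ)+1 ∈ s then x i else 0| := Finset.abs_sum_le_sum_abs _ _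
    _ ≤ ∑ _i : Fin n, ‖x‖ := Finset.sum_le_sum (fun i _ => by
        split
        · have := norm_le_pi_norm x i; simpa [Real.norm_eq_abs] using this
        · simpa using norm_nonneg x)
    _ = n * ‖x‖ := by simp [Finset.sum_const, Finset.card_univ, nsmul_eq_mul]

lemma gs_sub {n : ℕ} (s : Finset ℕ) (x₁ x₂ : Fin n → ℝ) :
    (∑ i : Fin n, (if (i:ℕ)+1 ∈ s then x₁ i else 0)) -
      (∑ i : Fin n, (if (i:ℕ)+1 ∈ s then x₂ i else 0)) =
    ∑ i : Fin n, (if (i:ℕ)+1 ∈ s then (x₁ - x₂) i else 0) := by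
  rw [← Finset.sum_sub_distrib]
  refine Finset.sum_congr rfl (fun i _ => ?_)
  split <;> simp [Pi.sub_apply]

lemma clLipV_quad {n b : ℕ} (s : Finset ℕ) (sgn : ℝ) (hs : |sgn| = 1) :
    ClLipV (fun (x : Fin n → ℝ) (y : Fin b → ℝ) =>
      sgn * ((∑ i : Fin n, (if (i:ℕ)+1 ∈ s then x i else 0)) + ∑ j, y j)^2) := by
  refine ⟨((n:ℝ)+b+1)^2, 1, by positivity, ?_⟩
  intro x₁ y₁ x₂ y₂
  set g : (Fin n → ℝ) → ℝ := fun x => ∑ i : Fin n, (if (i:ℕ)+1 ∈ s then x i else 0) with hg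
  set u₁ := g x₁ + ∑ j, y₁ j with hu₁
  set u₂ := g x₂ + ∑ j, y₂ j with hu₂
  have key : |sgn * u₁^2 - sgn * u₂^2| = |u₁ - u₂| * |u₁ + u₂| := by
    rw [show sgn*u₁^2 - sgn*u₂^2 = sgn*((u₁-u₂)*(u₁+u₂)) by ring, abs_mul, hs, one_mul, abs_mul]
  have hd : |u₁ - u₂| ≤ ((n:ℝ)+b+1) * (‖x₁ - x₂‖ + ‖y₁ - y₂‖) := by
    have h1 : |g x₁ - g x₂| ≤ (n:ℝ) * ‖x₁ - x₂‖ := by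
      rw [hg]; rw [gs_sub s x₁ x₂]; exact gs_bound s (x₁ - x₂)
    have h2 : |(∑ j, y₁ j) - (∑ j, y₂ j)| ≤ (b:ℝ) * ‖y₁ - y₂‖ := by
      rw [← Finset.sum_sub_distrib]
      have : ∀ j, (y₁ j - y₂ j) = (y₁ - y₂) j := fun j => rfl
      calc |∑ j, (y₁ j - y₂ j)| = |∑ j, (y₁ - y₂) j| := by simp [Pi.sub_apply]
        _ ≤ b * ‖y₁ - y₂‖ := sum_bound_fin _
    have : |u₁ - u₂| ≤ |g x₁ - g x₂| + |(∑ j, y₁ j) - (∑ j, y₂ j)| := by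
      rw [hu₁, hu₂]
      calc |g x₁ + ∑ j, y₁ j - (g x₂ + ∑ j, y₂ j)|
          = |(g x₁ - g x₂) + ((∑ j, y₁ j) - (∑ j, y₂ j))| := by ring_nf
        _ ≤ _ := abs_add_le _ _
    have hx : (0:ℝ) ≤ ‖x₁ - x₂‖ := norm_nonneg _
    have hy : (0:ℝ) ≤ ‖y₁ - y₂‖ := norm_nonneg _
    nlinarith
  have hsum : |u₁ + u₂| ≤ ((n:ℝ)+b+1) * (1 + (‖x₁‖ + ‖y₁‖)^1 + (‖x₂‖ + ‖y₂‖)^1) := by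
    have b1 := gs_bound s x₁
    have b2 := gs_bound s x₂
    have b3 := sum_bound_fin y₁
    have b4 := sum_bound_fin y₂
    have : |u₁ + u₂| ≤ |g x₁| + |∑ j, y₁ j| + (|g x₂| + |∑ j, y₂ j|) := by
      rw [hu₁, hu₂]
      calc |g x₁ + ∑ j, y₁ j + (g x₂ + ∑ j, y₂ j)|
          ≤ |g x₁ + ∑ j, y₁ j| + |g x₂ + ∑ j, y₂ j| := abs_add_le _ _
        _ ≤ _ := add_le_add (abs_add_le _ _) (abs_add_le _ _)
    have n1 : (0:ℝ) ≤ ‖x₁‖ := norm_nonneg _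
    have n2 : (0:ℝ) ≤ ‖y₁‖ := norm_nonneg _
    have n3 : (0:ℝ) ≤ ‖x₂‖ := norm_nonneg _
    have n4 : (0:ℝ) ≤ ‖y₂‖ := norm_nonneg _
    have hb : (0:ℝ) ≤ (b:ℝ) := Nat.cast_nonneg _
    have hn : (0:ℝ) ≤ (n:ℝ) := Nat.cast_nonneg _
    nlinarith
  rw [key]
  have h1 : (0:ℝ) ≤ |u₁ + u₂| := abs_nonneg _
  have h2 : (0:ℝ) ≤ |u₁ - u₂| := abs_nonneg _
  have h3 : (0:ℝ) ≤ ((n:ℝ)+b+1) * (‖x₁ - x₂‖ + ‖y₁ - y₂‖) := by positivity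
  calc |u₁ - u₂| * |u₁ + u₂|
      ≤ (((n:ℝ)+b+1) * (‖x₁ - x₂‖ + ‖y₁ - y₂‖)) * (((n:ℝ)+b+1) * (1 + (‖x₁‖ + ‖y₁‖)^1 + (‖x₂‖ + ‖y₂‖)^1)) :=
        mul_le_mul hd hsum h1 h3
    _ = ((n:ℝ)+b+1)^2 * (1 + (‖x₁‖ + ‖y₁‖)^1 + (‖x₂‖ + ‖y₂‖)^1) * (‖x₁ - x₂‖ + ‖y₁ - y₂‖) := by ring

lemma clLipN_quad {a : ℕ} (sgn : ℝ) (hs : |sgn| = 1) :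
    ClLipN (fun (x : Fin a → ℝ) => sgn * (∑ i, x i)^2) := by
  refine ⟨((a:ℝ)+1)^2, 1, by positivity, ?_⟩
  intro x y
  set u₁ := ∑ i, x i
  set u₂ := ∑ i, y i
  have key : |sgn * u₁^2 - sgn * u₂^2| = |u₁ - u₂| * |u₁ + u₂| := by
    rw [show sgn*u₁^2 - sgn*u₂^2 = sgn*((u₁-u₂)*(u₁+u₂)) by ring, abs_mul, hs, one_mul, abs_mul]
  have hd : |u₁ - u₂| ≤ (a:ℝ) * ‖x - y‖ := by
    rw [show u₁ - u₂ = ∑ i, (x - y) i by rw [← Finset.sum_sub_distrib]; simp [Pi.sub_apply]]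
    exact sum_bound_fin _
  have hsum : |u₁ + u₂| ≤ (a:ℝ) * (‖x‖ + ‖y‖) := by
    have := abs_add_le u₁ u₂
    have b1 := sum_bound_fin x
    have b2 := sum_bound_fin y
    nlinarith
  rw [key]
  have n1 : (0:ℝ) ≤ ‖x‖ := norm_nonneg _
  have n2 : (0:ℝ) ≤ ‖y‖ := norm_nonneg _
  have n3 : (0:ℝ) ≤ ‖x - y‖ := norm_nonneg _
  have ha : (0:ℝ) ≤ (a:ℝ) := Nat.cast_nonneg _
  have h2 : (0:ℝ) ≤ |u₁ - u₂| := abs_nonneg _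
  calc |u₁ - u₂| * |u₁ + u₂| ≤ ((a:ℝ) * ‖x - y‖) * ((a:ℝ) * (‖x‖ + ‖y‖)) :=
        mul_le_mul hd hsum (abs_nonneg _) (by positivity)
    _ ≤ ((a:ℝ)+1)^2 * (1 + ‖x‖^1 + ‖y‖^1) * ‖x - y‖ := by nlinarith
  
lemma clLipN_lin {a : ℕ} (sgn : ℝ) (hs : |sgn| = 1) :
    ClLipN (fun (x : Fin a → ℝ) => sgn * (∑ i, x i)) := by
  refine ⟨(a:ℝ)+1, 0, by positivity, ?_⟩
  intro x y
  have hd : |sgn * (∑ i, x i) - sgn * (∑ i, y i)| ≤ (a:ℝ) * ‖x - y‖ := by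
    rw [show sgn * (∑ i, x i) - sgn * (∑ i, y i) = sgn * ((∑ i, x i) - (∑ i, y i)) by ring,
      abs_mul, hs, one_mul]
    rw [show (∑ i, x i) - (∑ i, y i) = ∑ i, (x - y) i by rw [← Finset.sum_sub_distrib]; simp [Pi.sub_apply]]
    exact sum_bound_fin _
  have n3 : (0:ℝ) ≤ ‖x - y‖ := norm_nonneg _
  have ha : (0:ℝ) ≤ (a:ℝ) := Nat.cast_nonneg _
  calc |sgn * (∑ i, x i) - sgn * (∑ i, y i)| ≤ (a:ℝ) * ‖x - y‖ := hd
    _ ≤ ((a:ℝ)+1) * (1 + ‖x‖^0 + ‖y‖^0) * ‖x - y‖ := by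
        simp only [pow_zero]; nlinarith

lemma sum_Ioc_shift (f : ℕ → ℝ) (q r : ℕ) :
    ∑ k ∈ Finset.Ioc q (q+r), f k = ∑ i ∈ Finset.range r, f (q+1+i) := by
  rw [← Finset.Icc_add_one_left_eq_Ioc, ← Finset.Ico_add_one_right_eq_Icc, Finset.sum_Ico_eq_sum_range]
  have h : q+r+1-(q+1) = r := by omega
  rw [h]

end Lip

section Key

variable {Ω : Type}

/-- Block additivity of `E[(A+B)²]` and `e[(A+B)²]` for an independent later block `B`
with mean zero in both senses. -/
lemma key2 (ℰ : SLE Ω) (m : ℕ) (X : ℕ → Ω → ℝ) (hmdep : MDepSeq ℰ m X)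
    (n ℓ : ℕ) (hℓ : 1 ≤ ℓ) (s : Finset ℕ) (hs : s ⊆ Finset.Icc 1 n)
    (hB0 : ℰ.E (fun ω => ∑ k ∈ Finset.Ioc (n+m) (n+m+ℓ), X k ω) = 0)
    (hB0' : ℰ.e (fun ω => ∑ k ∈ Finset.Ioc (n+m) (n+m+ℓ), X k ω) = 0) :
    (ℰ.E (fun ω => (∑ k ∈ s, X k ω + ∑ k ∈ Finset.Ioc (n+m) (n+m+ℓ), X k ω)^2)
      = ℰ.E (fun ω => (∑ k ∈ s, X k ω)^2)
        + ℰ.E (fun ω => (∑ k ∈ Finset.Ioc (n+m) (n+m+ℓ), X k ω)^2)) ∧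
    (ℰ.e (fun ω => (∑ k ∈ s, X k ω + ∑ k ∈ Finset.Ioc (n+m) (n+m+ℓ), X k ω)^2)
      = ℰ.e (fun ω => (∑ k ∈ s, X k ω)^2)
        + ℰ.e (fun ω => (∑ k ∈ Finset.Ioc (n+m) (n+m+ℓ), X k ω)^2)) := by
  classical
  set A : Ω → ℝ := fun ω => ∑ k ∈ s, X k ω with hA
  set B : Ω → ℝ := fun ω => ∑ k ∈ Finset.Ioc (n+m) (n+m+ℓ), X k ω with hB
  have hml : m + ℓ - m = ℓ := by omega
  have hindep := hmdep n (m+ℓ) (by omega)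
  -- conversion of the x-part
  have hgX : ∀ ω, (∑ i : Fin n, (if (i:ℕ)+1 ∈ s then X ((i:ℕ)+1) ω else 0)) = A ω := by
    intro ω
    rw [Fin.sum_univ_eq_sum_range (fun i => if i+1 ∈ s then X (i+1) ω else 0) n]
    have h1 : ∑ i ∈ Finset.range n, (if i+1 ∈ s then X (i+1) ω else 0)
        = ∑ k ∈ Finset.Ioc 0 n, (if k ∈ s then X k ω else 0) := by
      have h2 := sum_Ioc_shift (fun k => if k ∈ s then X k ω else 0) 0 n
      simp only [Nat.zero_add] at h2
      rw [h2]
      refine Finset.sum_congr rfl (fun i _ => ?_)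
      have h3 : 1+i = i+1 := by omega
      rw [h3]
    rw [h1, ← Finset.Icc_add_one_left_eq_Ioc]
    rw [Finset.sum_ite_mem]
    rw [Finset.inter_eq_right.mpr]
    exact hs
  -- conversion of the y-part
  have hhY : ∀ ω, (∑ j : Fin (m+ℓ-m), X (n+m+1+(j:ℕ)) ω) = B ω := by
    intro ω
    rw [Fin.sum_univ_eq_sum_range (fun j => X (n+m+1+j) ω) (m+ℓ-m), hml]
    show _ = ∑ k ∈ Finset.Ioc (n+m) (n+m+ℓ), X k ω
    rw [sum_Ioc_shift (fun k => X k ω) (n+m) ℓ]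
  -- the E-part
  constructor
  · have hE := hindep
      (fun (x : Fin n → ℝ) (y : Fin (m+ℓ-m) → ℝ) =>
        (1:ℝ) * ((∑ i : Fin n, (if (i:ℕ)+1 ∈ s then x i else 0)) + ∑ j, y j)^2)
      (clLipV_quad s 1 (by norm_num))
    have hL : ℰ.E (fun ω =>
        (1:ℝ) * ((∑ i : Fin n, (if (i:ℕ)+1 ∈ s then X ((i:ℕ)+1) ω else 0))
          + ∑ j : Fin (m+ℓ-m), X (n+m+1+(j:ℕ)) ω)^2)
        = ℰ.E (fun ω => (A ω + B ω)^2) :=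
      E_congr ℰ (fun ω => by rw [hgX ω, hhY ω]; ring)
    have hR : ℰ.E (fun ω => ℰ.E (fun ω' =>
        (1:ℝ) * ((∑ i : Fin n, (if (i:ℕ)+1 ∈ s then X ((i:ℕ)+1) ω else 0))
          + ∑ j : Fin (m+ℓ-m), X (n+m+1+(j:ℕ)) ω')^2))
        = ℰ.E (fun ω => (A ω)^2) + ℰ.E (fun ω' => (B ω')^2) := by
      have hinner : ∀ ω, ℰ.E (fun ω' =>
          (1:ℝ) * ((∑ i : Fin n, (if (i:ℕ)+1 ∈ s then X ((i:ℕ)+1) ω else 0))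
            + ∑ j : Fin (m+ℓ-m), X (n+m+1+(j:ℕ)) ω')^2)
          = (A ω)^2 + ℰ.E (fun ω' => (B ω')^2) := by
        intro ω
        have h1 : ℰ.E (fun ω' =>
            (1:ℝ) * ((∑ i : Fin n, (if (i:ℕ)+1 ∈ s then X ((i:ℕ)+1) ω else 0))
              + ∑ j : Fin (m+ℓ-m), X (n+m+1+(j:ℕ)) ω')^2)
            = ℰ.E (fun ω' => (A ω + B ω')^2) :=
          E_congr ℰ (fun ω' => by rw [hgX ω, hhY ω']; ring)
        rw [h1]
        exact E_fix ℰ B hB0 hB0' (A ω)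
      calc ℰ.E (fun ω => ℰ.E (fun ω' =>
            (1:ℝ) * ((∑ i : Fin n, (if (i:ℕ)+1 ∈ s then X ((i:ℕ)+1) ω else 0))
              + ∑ j : Fin (m+ℓ-m), X (n+m+1+(j:ℕ)) ω')^2))
          = ℰ.E (fun ω => (A ω)^2 + ℰ.E (fun ω' => (B ω')^2)) :=
            E_congr ℰ (fun ω => hinner ω)
        _ = ℰ.E (fun ω => (A ω)^2) + ℰ.E (fun ω' => (B ω')^2) := E_add_const ℰ _ _
    simp only [] at hE
    rw [← hL, hE, hR]
  · have hE := hindep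
      (fun (x : Fin n → ℝ) (y : Fin (m+ℓ-m) → ℝ) =>
        (-1:ℝ) * ((∑ i : Fin n, (if (i:ℕ)+1 ∈ s then x i else 0)) + ∑ j, y j)^2)
      (clLipV_quad s (-1) (by norm_num))
    have hL : ℰ.E (fun ω =>
        (-1:ℝ) * ((∑ i : Fin n, (if (i:ℕ)+1 ∈ s then X ((i:ℕ)+1) ω else 0))
          + ∑ j : Fin (m+ℓ-m), X (n+m+1+(j:ℕ)) ω)^2)
        = - ℰ.e (fun ω => (A ω + B ω)^2) := by
      rw [E_congr ℰ (Q := fun ω => -((A ω + B ω)^2)) (fun ω => by rw [hgX ω, hhY ω]; ring)]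
      exact E_neg_eq ℰ _
    have hR : ℰ.E (fun ω => ℰ.E (fun ω' =>
        (-1:ℝ) * ((∑ i : Fin n, (if (i:ℕ)+1 ∈ s then X ((i:ℕ)+1) ω else 0))
          + ∑ j : Fin (m+ℓ-m), X (n+m+1+(j:ℕ)) ω')^2))
        = - (ℰ.e (fun ω => (A ω)^2) + ℰ.e (fun ω' => (B ω')^2)) := by
      have hinner : ∀ ω, ℰ.E (fun ω' =>
          (-1:ℝ) * ((∑ i : Fin n, (if (i:ℕ)+1 ∈ s then X ((i:ℕ)+1) ω else 0))
            + ∑ j : Fin (m+ℓ-m), X (n+m+1+(j:ℕ)) ω')^2)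
          = -((A ω)^2 + ℰ.e (fun ω' => (B ω')^2)) := by
        intro ω
        have h1 : ℰ.E (fun ω' =>
            (-1:ℝ) * ((∑ i : Fin n, (if (i:ℕ)+1 ∈ s then X ((i:ℕ)+1) ω else 0))
              + ∑ j : Fin (m+ℓ-m), X (n+m+1+(j:ℕ)) ω')^2)
            = ℰ.E (fun ω' => -((A ω + B ω')^2)) :=
          E_congr ℰ (fun ω' => by rw [hgX ω, hhY ω']; ring)
        rw [h1, E_neg_eq ℰ _, e_fix ℰ B hB0 hB0' (A ω)]
      calc ℰ.E (fun ω => ℰ.E (fun ω' =>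
            (-1:ℝ) * ((∑ i : Fin n, (if (i:ℕ)+1 ∈ s then X ((i:ℕ)+1) ω else 0))
              + ∑ j : Fin (m+ℓ-m), X (n+m+1+(j:ℕ)) ω')^2))
          = ℰ.E (fun ω => -((A ω)^2 + ℰ.e (fun ω' => (B ω')^2))) :=
            E_congr ℰ (fun ω => hinner ω)
        _ = ℰ.E (fun ω => -((A ω)^2) + (- ℰ.e (fun ω' => (B ω')^2))) :=
            E_congr ℰ (fun ω => by ring)
        _ = ℰ.E (fun ω => -((A ω)^2)) + (- ℰ.e (fun ω' => (B ω')^2)) := E_add_const ℰ _ _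
        _ = - (ℰ.e (fun ω => (A ω)^2) + ℰ.e (fun ω' => (B ω')^2)) := by
            rw [E_neg_eq ℰ (fun ω => (A ω)^2)]; ring
    simp only [] at hE
    rw [hL, hR] at hE
    linarith
end Key

section Stat

variable {Ω : Type}

lemma sum_fin_Ioc (g : ℕ → ℝ) (q r : ℕ) :
    (∑ i : Fin r, g ((i:ℕ)+1+q)) = ∑ k ∈ Finset.Ioc q (q+r), g k := by
  rw [sum_Ioc_shift g q r, Fin.sum_univ_eq_sum_range (fun i => g (i+1+q)) r]
  exact Finset.sum_congr rfl (fun i _ => by congr 1; omega)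

lemma sum_fin_Ioc0 (g : ℕ → ℝ) (r : ℕ) :
    (∑ i : Fin r, g ((i:ℕ)+1)) = ∑ k ∈ Finset.Ioc 0 r, g k := by
  have h := sum_Ioc_shift g 0 r
  simp only [Nat.zero_add] at h
  rw [h, Fin.sum_univ_eq_sum_range (fun i => g (i+1)) r]
  exact Finset.sum_congr rfl (fun i _ => by congr 1; omega)

/-- Stationarity for the square of a block sum. -/
lemma stat_sq (ℰ : SLE Ω) (X : ℕ → Ω → ℝ) (hstat : StationarySeq ℰ X) (q r : ℕ) :
    (ℰ.E (fun ω => (∑ k ∈ Finset.Ioc q (q+r), X k ω)^2)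
       = ℰ.E (fun ω => (∑ k ∈ Finset.Ioc 0 r, X k ω)^2)) ∧
    (ℰ.e (fun ω => (∑ k ∈ Finset.Ioc q (q+r), X k ω)^2)
       = ℰ.e (fun ω => (∑ k ∈ Finset.Ioc 0 r, X k ω)^2)) := by
  constructor
  · have h := hstat r q (fun x : Fin r → ℝ => (1:ℝ) * (∑ i, x i)^2) (clLipN_quad 1 (by norm_num))
    simp only [] at h
    have hL : ℰ.E (fun ω => (1:ℝ) * (∑ i : Fin r, X ((i:ℕ)+1) ω)^2)
        = ℰ.E (fun ω => (∑ k ∈ Finset.Ioc 0 r, X k ω)^2) :=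
      E_congr ℰ (fun ω => by rw [sum_fin_Ioc0 (fun k => X k ω) r]; ring)
    have hR : ℰ.E (fun ω => (1:ℝ) * (∑ i : Fin r, X ((i:ℕ)+1+q) ω)^2)
        = ℰ.E (fun ω => (∑ k ∈ Finset.Ioc q (q+r), X k ω)^2) :=
      E_congr ℰ (fun ω => by rw [sum_fin_Ioc (fun k => X k ω) q r]; ring)
    rw [hL, hR] at h
    exact h.symm
  · have h := hstat r q (fun x : Fin r → ℝ => (-1:ℝ) * (∑ i, x i)^2) (clLipN_quad (-1) (by norm_num))
    simp only [] at h
    have hL : ℰ.E (fun ω => (-1:ℝ) * (∑ i : Fin r, X ((i:ℕ)+1) ω)^2)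
        = - ℰ.e (fun ω => (∑ k ∈ Finset.Ioc 0 r, X k ω)^2) := by
      rw [E_congr ℰ (Q := fun ω => -((∑ k ∈ Finset.Ioc 0 r, X k ω)^2))
        (fun ω => by show _ = -(∑ k ∈ Finset.Ioc 0 r, X k ω)^2; rw [← sum_fin_Ioc0 (fun k => X k ω) r]; ring)]
      exact E_neg_eq ℰ _
    have hR : ℰ.E (fun ω => (-1:ℝ) * (∑ i : Fin r, X ((i:ℕ)+1+q) ω)^2)
        = - ℰ.e (fun ω => (∑ k ∈ Finset.Ioc q (q+r), X k ω)^2) := by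
      rw [E_congr ℰ (Q := fun ω => -((∑ k ∈ Finset.Ioc q (q+r), X k ω)^2))
        (fun ω => by show _ = -(∑ k ∈ Finset.Ioc q (q+r), X k ω)^2; rw [← sum_fin_Ioc (fun k => X k ω) q r]; ring)]
      exact E_neg_eq ℰ _
    rw [hL, hR] at h
    linarith

/-- `E[X_k] = e[X_k] = 0` for `k ≥ 1`. -/
lemma meanzero_one (ℰ : SLE Ω) (X : ℕ → Ω → ℝ) (hstat : StationarySeq ℰ X)
    (hmean : ℰ.E (X 1) = 0) (hmean' : ℰ.e (X 1) = 0) (k : ℕ) (hk : 1 ≤ k) :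
    ℰ.E (X k) = 0 ∧ ℰ.e (X k) = 0 := by
  constructor
  · have h := hstat 1 (k-1) (fun x : Fin 1 → ℝ => (1:ℝ) * (∑ i, x i)) (clLipN_lin 1 (by norm_num))
    simp only [Fin.sum_univ_one] at h
    have hL : ℰ.E (fun ω => (1:ℝ) * X ((0:Fin 1).val+1) ω) = ℰ.E (X 1) :=
      E_congr ℰ (fun ω => by norm_num)
    have hR : ℰ.E (fun ω => (1:ℝ) * X ((0:Fin 1).val+1+(k-1)) ω) = ℰ.E (X k) :=
      E_congr ℰ (fun ω => by
        have h2 : (0:Fin 1).val+1+(k-1) = k := by simp; omega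
        rw [h2]; ring)
    rw [hL, hR] at h
    rw [← h, hmean]
  · have h := hstat 1 (k-1) (fun x : Fin 1 → ℝ => (-1:ℝ) * (∑ i, x i)) (clLipN_lin (-1) (by norm_num))
    simp only [Fin.sum_univ_one] at h
    have hL : ℰ.E (fun ω => (-1:ℝ) * X ((0:Fin 1).val+1) ω) = - ℰ.e (X 1) := by
      rw [E_congr ℰ (Q := fun ω => -(X 1 ω)) (fun ω => by norm_num)]
      exact E_neg_eq ℰ _
    have hR : ℰ.E (fun ω => (-1:ℝ) * X ((0:Fin 1).val+1+(k-1)) ω) = - ℰ.e (X k) := by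
      rw [E_congr ℰ (Q := fun ω => -(X k ω)) (fun ω => by
        have h2 : (0:Fin 1).val+1+(k-1) = k := by simp; omega
        rw [h2]; ring)]
      exact E_neg_eq ℰ _
    rw [hL, hR] at h
    linarith [hmean']

/-- Block sums have zero upper and lower means. -/
lemma meanzero_Ioc (ℰ : SLE Ω) (X : ℕ → Ω → ℝ) (hstat : StationarySeq ℰ X)
    (hmean : ℰ.E (X 1) = 0) (hmean' : ℰ.e (X 1) = 0) (q r : ℕ) :
    ℰ.E (fun ω => ∑ k ∈ Finset.Ioc q (q+r), X k ω) = 0 ∧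
    ℰ.e (fun ω => ∑ k ∈ Finset.Ioc q (q+r), X k ω) = 0 := by
  have hup : ℰ.E (fun ω => ∑ k ∈ Finset.Ioc q (q+r), X k ω) ≤ 0 := by
    have h1 := E_sum_le ℰ (Finset.Ioc q (q+r)) (fun k => X k)
    have h2 : ∑ k ∈ Finset.Ioc q (q+r), ℰ.E (X k) = 0 := by
      apply Finset.sum_eq_zero
      intro k hk
      have : 1 ≤ k := by
        have := (Finset.mem_Ioc.mp hk).1; omega
      exact (meanzero_one ℰ X hstat hmean hmean' k this).1
    linarith
  have hdn : 0 ≤ ℰ.e (fun ω => ∑ k ∈ Finset.Ioc q (q+r), X k ω) := by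
    have h1 := e_sum_ge ℰ (Finset.Ioc q (q+r)) (fun k => X k)
    have h2 : ∑ k ∈ Finset.Ioc q (q+r), ℰ.e (X k) = 0 := by
      apply Finset.sum_eq_zero
      intro k hk
      have : 1 ≤ k := by
        have := (Finset.mem_Ioc.mp hk).1; omega
      exact (meanzero_one ℰ X hstat hmean hmean' k this).2
    linarith
  have hle := e_le_E ℰ (fun ω => ∑ k ∈ Finset.Ioc q (q+r), X k ω)
  constructor <;> linarith

end Stat

section Blocks

variable {Ω : Type}

noncomputable def aSeq (ℰ : SLE Ω) (X : ℕ → Ω → ℝ) (r : ℕ) : ℝ :=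
  ℰ.E (fun ω => (∑ k ∈ Finset.Ioc 0 r, X k ω)^2)

noncomputable def bSeq (ℰ : SLE Ω) (X : ℕ → Ω → ℝ) (r : ℕ) : ℝ :=
  ℰ.e (fun ω => (∑ k ∈ Finset.Ioc 0 r, X k ω)^2)

lemma e_const (ℰ : SLE Ω) (c : ℝ) : ℰ.e (fun _ => c) = c := by
  have h : (fun ω : Ω => -((fun _ : Ω => c) ω)) = (fun _ : Ω => -c) := rfl
  rw [e_eq, h, ℰ.const]; ring

lemma aSeq_nonneg (ℰ : SLE Ω) (X : ℕ → Ω → ℝ) (r : ℕ) : 0 ≤ aSeq ℰ X r :=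
  E_nonneg ℰ (fun ω => sq_nonneg _)

lemma bSeq_nonneg (ℰ : SLE Ω) (X : ℕ → Ω → ℝ) (r : ℕ) : 0 ≤ bSeq ℰ X r :=
  e_nonneg ℰ (fun ω => sq_nonneg _)

lemma bSeq_le_aSeq (ℰ : SLE Ω) (X : ℕ → Ω → ℝ) (r : ℕ) : bSeq ℰ X r ≤ aSeq ℰ X r :=
  e_le_E ℰ _

lemma aSeq_zero (ℰ : SLE Ω) (X : ℕ → Ω → ℝ) : aSeq ℰ X 0 = 0 := by
  unfold aSeq
  rw [E_congr ℰ (Q := fun _ => (0:ℝ)) (fun ω => by simp)]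
  exact ℰ.const 0

/-- Linear bound on the second moment of partial sums: `a_j ≤ (m+1)² a_1 j`. -/
lemma aSeq_linear (ℰ : SLE Ω) (m : ℕ) (X : ℕ → Ω → ℝ)
    (hstat : StationarySeq ℰ X) (hmdep : MDepSeq ℰ m X)
    (hmean : ℰ.E (X 1) = 0) (hmean' : ℰ.e (X 1) = 0) (j : ℕ) :
    aSeq ℰ X j ≤ ((m:ℝ)+1)^2 * aSeq ℰ X 1 * j := by
  classical
  have ha1 : 0 ≤ aSeq ℰ X 1 := aSeq_nonneg ℰ X 1
  -- residue-class partial sums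
  set W : ℕ → ℕ → Ω → ℝ := fun j rr ω =>
    ∑ k ∈ (Finset.Icc 1 j).filter (fun k => k % (m+1) = rr), X k ω with hW
  have claim1 : ∀ j rr, ℰ.E (fun ω => (W j rr ω)^2) ≤ (j:ℝ) * aSeq ℰ X 1 := by
    intro j
    induction j with
    | zero =>
      intro rr
      have : ∀ ω, (W 0 rr ω)^2 = 0 := by
        intro ω; rw [hW]; simp
      rw [E_congr ℰ (Q := fun _ => (0:ℝ)) this, ℰ.const 0]
      simp
    | succ j ih =>
      intro rr
      have hIcc : Finset.Icc 1 (j+1) = insert (j+1) (Finset.Icc 1 j) := by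
        ext x
        simp only [Finset.mem_Icc, Finset.mem_insert]
        omega
      by_cases hpred : (j+1) % (m+1) = rr
      · -- the new point joins class rr
        have hnotmem : (j+1) ∉ (Finset.Icc 1 j).filter (fun k => k % (m+1) = rr) := by
          simp only [Finset.mem_filter, Finset.mem_Icc]
          push_neg
          intro h; omega
        have hWsplit : ∀ ω, W (j+1) rr ω = W j rr ω + X (j+1) ω := by
          intro ω
          rw [hW]
          simp only []
          rw [hIcc, Finset.filter_insert, if_pos hpred, Finset.sum_insert hnotmem]
          ring
        have hsub : ((Finset.Icc 1 j).filter (fun k => k % (m+1) = rr)) ⊆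
            Finset.Icc 1 (j - m) := by
          intro k hk
          simp only [Finset.mem_filter, Finset.mem_Icc] at hk
          obtain ⟨⟨hk1, hk2⟩, hk3⟩ := hk
          have hmod : k % (m+1) = (j+1) % (m+1) := by rw [hk3, hpred]
          have hdvd : (m+1) ∣ (j+1 - k) :=
            (Nat.modEq_iff_dvd' (by omega)).mp hmod
          have hne : j + 1 - k ≠ 0 := by omega
          have : m + 1 ≤ j + 1 - k := Nat.le_of_dvd (by omega) hdvd
          simp only [Finset.mem_Icc]
          omega
        by_cases hjm : m ≤ j
        · -- use independence
          have hn : j - m + m = j := by omega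
          have hkey := key2 ℰ m X hmdep (j - m) 1 le_rfl
            ((Finset.Icc 1 j).filter (fun k => k % (m+1) = rr)) hsub
            ((meanzero_Ioc ℰ X hstat hmean hmean' (j - m + m) 1).1)
            ((meanzero_Ioc ℰ X hstat hmean hmean' (j - m + m) 1).2)
          rw [hn] at hkey
          have hsingle : ∀ ω, (∑ k ∈ Finset.Ioc j (j+1), X k ω) = X (j+1) ω := by
            intro ω; rw [Nat.Ioc_succ_singleton, Finset.sum_singleton]
          have hXsq : ℰ.E (fun ω => (∑ k ∈ Finset.Ioc j (j+1), X k ω)^2) = aSeq ℰ X 1 := by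
            have := (stat_sq ℰ X hstat j 1).1
            exact this
          have hEW : ℰ.E (fun ω => (W (j+1) rr ω)^2)
              = ℰ.E (fun ω => (W j rr ω)^2) + aSeq ℰ X 1 := by
            have hL : ℰ.E (fun ω => (W (j+1) rr ω)^2)
                = ℰ.E (fun ω => (W j rr ω + ∑ k ∈ Finset.Ioc j (j+1), X k ω)^2) :=
              E_congr ℰ (fun ω => by rw [hWsplit ω, hsingle ω])
            rw [hL, hkey.1, hXsq]
          rw [hEW]
          have := ih rr
          push_cast
          linarith
        · -- the old class is empty
          have hempty : ((Finset.Icc 1 j).filter (fun k => k % (m+1) = rr)) = ∅ := by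
            rw [Finset.eq_empty_iff_forall_notMem]
            intro k hk
            have := hsub hk
            simp only [Finset.mem_Icc] at this
            omega
          have hXsq : ℰ.E (fun ω => (∑ k ∈ Finset.Ioc j (j+1), X k ω)^2) = aSeq ℰ X 1 :=
            (stat_sq ℰ X hstat j 1).1
          have hEW : ℰ.E (fun ω => (W (j+1) rr ω)^2) = aSeq ℰ X 1 := by
            rw [E_congr ℰ (Q := fun ω => (∑ k ∈ Finset.Ioc j (j+1), X k ω)^2)
              (fun ω => by
                rw [hWsplit ω, hW]
                simp only []
                rw [hempty, Nat.Ioc_succ_singleton, Finset.sum_singleton, Finset.sum_empty]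
                ring)]
            exact hXsq
          rw [hEW]
          have : (0:ℝ) ≤ (j:ℝ) * aSeq ℰ X 1 := by positivity
          push_cast
          linarith
      · -- the new point does not join class rr
        have hWsame : ∀ ω, W (j+1) rr ω = W j rr ω := by
          intro ω
          rw [hW]
          simp only []
          rw [hIcc, Finset.filter_insert, if_neg hpred]
        have : ℰ.E (fun ω => (W (j+1) rr ω)^2) = ℰ.E (fun ω => (W j rr ω)^2) :=
          E_congr ℰ (fun ω => by rw [hWsame ω])
        rw [this]
        have := ih rr
        have : (0:ℝ) ≤ aSeq ℰ X 1 := ha1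
        push_cast
        linarith [ih rr]
  -- decomposition into residue classes
  have claim2 : ∀ ω, (∑ k ∈ Finset.Ioc 0 j, X k ω) = ∑ rr ∈ Finset.range (m+1), W j rr ω := by
    intro ω
    rw [← Finset.Icc_add_one_left_eq_Ioc]
    rw [hW]
    simp only []
    exact (Finset.sum_fiberwise_of_maps_to
      (fun k _ => Finset.mem_range.mpr (Nat.mod_lt _ (by omega))) (fun k => X k ω)).symm
  -- Cauchy-Schwarz pointwise
  have hCS : ∀ ω, (∑ k ∈ Finset.Ioc 0 j, X k ω)^2
      ≤ ((m:ℝ)+1) * ∑ rr ∈ Finset.range (m+1), (W j rr ω)^2 := by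
    intro ω
    rw [claim2 ω]
    have := Finset.sum_mul_sq_le_sq_mul_sq (Finset.range (m+1))
      (fun _ => (1:ℝ)) (fun rr => W j rr ω)
    simp only [one_mul, one_pow, Finset.sum_const, Finset.card_range, nsmul_eq_mul] at this
    rw [mul_one] at this
    calc (∑ rr ∈ Finset.range (m+1), W j rr ω)^2
        ≤ ((m+1:ℕ):ℝ) * ∑ rr ∈ Finset.range (m+1), (W j rr ω)^2 := this
      _ = ((m:ℝ)+1) * ∑ rr ∈ Finset.range (m+1), (W j rr ω)^2 := by push_cast; ring
  have step1 : aSeq ℰ X j ≤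
      ℰ.E (fun ω => ((m:ℝ)+1) * ∑ rr ∈ Finset.range (m+1), (W j rr ω)^2) :=
    E_mono ℰ hCS
  have step2 : ℰ.E (fun ω => ((m:ℝ)+1) * ∑ rr ∈ Finset.range (m+1), (W j rr ω)^2)
      = ((m:ℝ)+1) * ℰ.E (fun ω => ∑ rr ∈ Finset.range (m+1), (W j rr ω)^2) :=
    E_smul ℰ _ (by positivity) _
  have step3 : ℰ.E (fun ω => ∑ rr ∈ Finset.range (m+1), (W j rr ω)^2)
      ≤ ∑ rr ∈ Finset.range (m+1), ℰ.E (fun ω => (W j rr ω)^2) :=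
    E_sum_le ℰ _ _
  have step4 : ∑ rr ∈ Finset.range (m+1), ℰ.E (fun ω => (W j rr ω)^2)
      ≤ ∑ _rr ∈ Finset.range (m+1), (j:ℝ) * aSeq ℰ X 1 :=
    Finset.sum_le_sum (fun rr _ => claim1 j rr)
  have step5 : ∑ _rr ∈ Finset.range (m+1), (j:ℝ) * aSeq ℰ X 1
      = ((m:ℝ)+1) * ((j:ℝ) * aSeq ℰ X 1) := by
    rw [Finset.sum_const, Finset.card_range, nsmul_eq_mul]; push_cast; ring
  have hm1 : (0:ℝ) ≤ (m:ℝ)+1 := by positivity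
  calc aSeq ℰ X j ≤ ((m:ℝ)+1) * ℰ.E (fun ω => ∑ rr ∈ Finset.range (m+1), (W j rr ω)^2) := by
        rw [← step2]; exact step1
    _ ≤ ((m:ℝ)+1) * (((m:ℝ)+1) * ((j:ℝ) * aSeq ℰ X 1)) := by
        apply mul_le_mul_of_nonneg_left _ hm1
        rw [← step5]
        exact le_trans step3 step4
    _ = ((m:ℝ)+1)^2 * aSeq ℰ X 1 * j := by ring

end Blocks

section Blocks2

variable {Ω : Type}

/-- Second moments of sums of independent big blocks add up. -/
lemma T_moment (ℰ : SLE Ω) (m : ℕ) (X : ℕ → Ω → ℝ)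
    (hstat : StationarySeq ℰ X) (hmdep : MDepSeq ℰ m X)
    (hmean : ℰ.E (X 1) = 0) (hmean' : ℰ.e (X 1) = 0)
    (p : ℕ) (hmp : m ≤ p) (hp : 1 ≤ p) (k : ℕ) :
    (ℰ.E (fun ω => (∑ i ∈ (Finset.range k).biUnion
        (fun i => Finset.Ioc (i*(p+m)) (i*(p+m)+p)), X i ω)^2) = (k:ℝ) * aSeq ℰ X p) ∧
    (ℰ.e (fun ω => (∑ i ∈ (Finset.range k).biUnion
        (fun i => Finset.Ioc (i*(p+m)) (i*(p+m)+p)), X i ω)^2) = (k:ℝ) * bSeq ℰ X p) := by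
  classical
  set q := p + m with hq
  set Tset : ℕ → Finset ℕ := fun k => (Finset.range k).biUnion
    (fun i => Finset.Ioc (i*q) (i*q+p)) with hTset
  have memT : ∀ k x, x ∈ Tset k → 1 ≤ x ∧ x ≤ (k-1)*q + p ∧ 1 ≤ k := by
    intro k x hx
    simp only [hTset] at hx
    simp only [Finset.mem_biUnion, Finset.mem_range, Finset.mem_Ioc] at hx
    obtain ⟨i, hik, hx1, hx2⟩ := hx
    have hiq : i*q ≤ (k-1)*q := Nat.mul_le_mul_right q (by omega)
    constructor; · omega
    constructor; · omega
    · omega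
  induction k with
  | zero =>
    have hz : ∀ ω, (∑ i ∈ Tset 0, X i ω)^2 = 0 := by
      intro ω; simp only [hTset]; simp
    constructor
    · rw [E_congr ℰ (Q := fun _ => (0:ℝ)) hz, ℰ.const 0]; simp
    · rw [e_congr ℰ (Q := fun _ => (0:ℝ)) hz, e_const ℰ 0]; simp
  | succ k ih =>
    have hsplitset : Tset (k+1) = Finset.Ioc (k*q) (k*q+p) ∪ Tset k := by
      simp only [hTset]
      rw [Finset.range_add_one, Finset.biUnion_insert]
    have hdisj : Disjoint (Finset.Ioc (k*q) (k*q+p)) (Tset k) := by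
      rw [Finset.disjoint_left]
      intro x hx hx'
      have h1 := (Finset.mem_Ioc.mp hx).1
      have h2 := (memT k x hx').2.1
      have h3 := (memT k x hx').2.2
      have : (k-1)*q + q = k*q := by
        have : (k-1+1)*q = k*q := by congr 1; omega
        rw [← this]; ring
      omega
    have hsplit : ∀ ω, ∑ i ∈ Tset (k+1), X i ω
        = ∑ i ∈ Tset k, X i ω + ∑ i ∈ Finset.Ioc (k*q) (k*q+p), X i ω := by
      intro ω
      rw [hsplitset, Finset.sum_union hdisj]
      ring
    by_cases hk0 : k = 0
    · subst hk0
      have h1 : ∀ ω, ∑ i ∈ Tset 1, X i ω = ∑ i ∈ Finset.Ioc 0 p, X i ω := by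
        intro ω
        rw [hsplit ω]
        have : ∀ ω, ∑ i ∈ Tset 0, X i ω = 0 := by intro ω; simp only [hTset]; simp
        rw [this ω]
        simp [Nat.zero_mul]
      constructor
      · rw [E_congr ℰ (Q := fun ω => (∑ i ∈ Finset.Ioc 0 p, X i ω)^2)
          (fun ω => by rw [h1 ω])]
        unfold aSeq; simp
      · rw [e_congr ℰ (Q := fun ω => (∑ i ∈ Finset.Ioc 0 p, X i ω)^2)
          (fun ω => by rw [h1 ω])]
        unfold bSeq; simp
    · -- k ≥ 1 : use independence
      have hk1 : 1 ≤ k := by omega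
      have hqk : q ≤ k*q := Nat.le_mul_of_pos_left q (by omega)
      have hn : k*q - m + m = k*q := by omega
      have hsub : Tset k ⊆ Finset.Icc 1 (k*q - m) := by
        intro x hx
        obtain ⟨h1, h2, _⟩ := memT k x hx
        have : (k-1)*q + q = k*q := by
          have : (k-1+1)*q = k*q := by congr 1; omega
          rw [← this]; ring
        simp only [Finset.mem_Icc]
        omega
      have hkey := key2 ℰ m X hmdep (k*q - m) p hp (Tset k) hsub
        (by rw [hn]; exact (meanzero_Ioc ℰ X hstat hmean hmean' (k*q) p).1)
        (by rw [hn]; exact (meanzero_Ioc ℰ X hstat hmean hmean' (k*q) p).2)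
      rw [hn] at hkey
      have hstatp := stat_sq ℰ X hstat (k*q) p
      constructor
      · have hL : ℰ.E (fun ω => (∑ i ∈ Tset (k+1), X i ω)^2)
            = ℰ.E (fun ω => (∑ i ∈ Tset k, X i ω + ∑ i ∈ Finset.Ioc (k*q) (k*q+p), X i ω)^2) :=
          E_congr ℰ (fun ω => by rw [hsplit ω])
        rw [hL, hkey.1, ih.1, hstatp.1]
        show ((k:ℝ)) * aSeq ℰ X p + aSeq ℰ X p = ((k+1:ℕ):ℝ) * aSeq ℰ X p
        push_cast; ring
      · have hL : ℰ.e (fun ω => (∑ i ∈ Tset (k+1), X i ω)^2)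
            = ℰ.e (fun ω => (∑ i ∈ Tset k, X i ω + ∑ i ∈ Finset.Ioc (k*q) (k*q+p), X i ω)^2) :=
          e_congr ℰ (fun ω => by rw [hsplit ω])
        rw [hL, hkey.2, ih.2, hstatp.2]
        show ((k:ℝ)) * bSeq ℰ X p + bSeq ℰ X p = ((k+1:ℕ):ℝ) * bSeq ℰ X p
        push_cast; ring

/-- Second moments of sums of the small gaps add up. -/
lemma G_moment (ℰ : SLE Ω) (m : ℕ) (X : ℕ → Ω → ℝ)
    (hstat : StationarySeq ℰ X) (hmdep : MDepSeq ℰ m X)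
    (hmean : ℰ.E (X 1) = 0) (hmean' : ℰ.e (X 1) = 0)
    (p : ℕ) (hmp : m ≤ p) (hp : 1 ≤ p) (k : ℕ) :
    ℰ.E (fun ω => (∑ i ∈ (Finset.range k).biUnion
        (fun i => Finset.Ioc (i*(p+m)+p) (i*(p+m)+p+m)), X i ω)^2) = (k:ℝ) * aSeq ℰ X m := by
  classical
  set q := p + m with hq
  set Gset : ℕ → Finset ℕ := fun k => (Finset.range k).biUnion
    (fun i => Finset.Ioc (i*q+p) (i*q+p+m)) with hGset
  by_cases hm0 : m = 0
  · subst hm0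
    have hz : ∀ k ω, (∑ i ∈ Gset k, X i ω)^2 = 0 := by
      intro k ω
      simp only [hGset]
      have h0 : ∀ i, Finset.Ioc (i*q+p) (i*q+p+0) = ∅ := by
        intro i; simp
      have h1 : ((Finset.range k).biUnion fun i => Finset.Ioc (i*q+p) (i*q+p+0)) = ∅ := by
        ext x; simp [h0]
      rw [h1]
      simp
    rw [E_congr ℰ (Q := fun _ => (0:ℝ)) (hz k), ℰ.const 0, aSeq_zero]
    simp
  · have hm1 : 1 ≤ m := by omega
    have memG : ∀ k x, x ∈ Gset k → 1 ≤ x ∧ x ≤ (k-1)*q + p + m ∧ 1 ≤ k := by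
      intro k x hx
      simp only [hGset] at hx
      simp only [Finset.mem_biUnion, Finset.mem_range, Finset.mem_Ioc] at hx
      obtain ⟨i, hik, hx1, hx2⟩ := hx
      have hiq : i*q ≤ (k-1)*q := Nat.mul_le_mul_right q (by omega)
      exact ⟨by omega, by omega, by omega⟩
    induction k with
    | zero =>
      have hz : ∀ ω, (∑ i ∈ Gset 0, X i ω)^2 = 0 := by
        intro ω; simp only [hGset]; simp
      rw [E_congr ℰ (Q := fun _ => (0:ℝ)) hz, ℰ.const 0]; simp
    | succ k ih =>
      have hsplitset : Gset (k+1) = Finset.Ioc (k*q+p) (k*q+p+m) ∪ Gset k := by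
        simp only [hGset]
        rw [Finset.range_add_one, Finset.biUnion_insert]
      have hkq : (k-1)*q + q = k*q ∨ k = 0 := by
        rcases Nat.eq_zero_or_pos k with h | h
        · right; exact h
        · left
          have : (k-1+1)*q = k*q := by congr 1; omega
          rw [← this]; ring
      have hdisj : Disjoint (Finset.Ioc (k*q+p) (k*q+p+m)) (Gset k) := by
        rw [Finset.disjoint_left]
        intro x hx hx'
        have h1 := (Finset.mem_Ioc.mp hx).1
        have h2 := (memG k x hx').2.1
        have h3 := (memG k x hx').2.2
        rcases hkq with h | h
        · omega
        · omega
      have hsplit : ∀ ω, ∑ i ∈ Gset (k+1), X i ω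
          = ∑ i ∈ Gset k, X i ω + ∑ i ∈ Finset.Ioc (k*q+p) (k*q+p+m), X i ω := by
        intro ω
        rw [hsplitset, Finset.sum_union hdisj]
        ring
      have hn : k*q + p - m + m = k*q + p := by omega
      have hsub : Gset k ⊆ Finset.Icc 1 (k*q + p - m) := by
        intro x hx
        obtain ⟨h1, h2, hk1⟩ := memG k x hx
        rcases hkq with h | h
        · simp only [Finset.mem_Icc]; omega
        · omega
      have hkey := key2 ℰ m X hmdep (k*q + p - m) m hm1 (Gset k) hsub
        (by rw [hn]; exact (meanzero_Ioc ℰ X hstat hmean hmean' (k*q+p) m).1)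
        (by rw [hn]; exact (meanzero_Ioc ℰ X hstat hmean hmean' (k*q+p) m).2)
      rw [hn] at hkey
      have hstatm := (stat_sq ℰ X hstat (k*q+p) m).1
      have hL : ℰ.E (fun ω => (∑ i ∈ Gset (k+1), X i ω)^2)
          = ℰ.E (fun ω => (∑ i ∈ Gset k, X i ω + ∑ i ∈ Finset.Ioc (k*q+p) (k*q+p+m), X i ω)^2) :=
        E_congr ℰ (fun ω => by rw [hsplit ω])
      rw [hL, hkey.1, ih, hstatm]
      show ((k:ℝ)) * aSeq ℰ X m + aSeq ℰ X m = ((k+1:ℕ):ℝ) * aSeq ℰ X m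
      push_cast; ring

/-- Pointwise decomposition of `S_n` into big blocks, gaps, and a tail. -/
lemma S_decomp (X : ℕ → Ω → ℝ) (p m : ℕ) (n : ℕ) :
    ∀ ω, ∑ i ∈ Finset.Ioc 0 n, X i ω =
      (∑ i ∈ (Finset.range (n/(p+m))).biUnion
        (fun i => Finset.Ioc (i*(p+m)) (i*(p+m)+p)), X i ω)
      + ((∑ i ∈ (Finset.range (n/(p+m))).biUnion
          (fun i => Finset.Ioc (i*(p+m)+p) (i*(p+m)+p+m)), X i ω)
        + ∑ i ∈ Finset.Ioc ((n/(p+m))*(p+m)) n, X i ω) := by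
  intro ω
  set q := p + m with hq
  set k := n / q with hk
  have main : ∀ K : ℕ, (∑ i ∈ (Finset.range K).biUnion
        (fun i => Finset.Ioc (i*q) (i*q+p)), X i ω)
      + (∑ i ∈ (Finset.range K).biUnion
          (fun i => Finset.Ioc (i*q+p) (i*q+p+m)), X i ω)
      = ∑ i ∈ Finset.Ioc 0 (K*q), X i ω := by
    intro K
    induction K with
    | zero => simp
    | succ K ih =>
      have hT : Disjoint (Finset.Ioc (K*q) (K*q+p)) ((Finset.range K).biUnion
          (fun i => Finset.Ioc (i*q) (i*q+p))) := by
        rw [Finset.disjoint_left]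
        intro x hx hx'
        simp only [Finset.mem_biUnion, Finset.mem_range, Finset.mem_Ioc] at hx hx'
        obtain ⟨i, hiK, h1, h2⟩ := hx'
        have : i*q + q ≤ K*q := by
          have : (i+1)*q ≤ K*q := Nat.mul_le_mul_right q (by omega)
          calc i*q + q = (i+1)*q := by ring
            _ ≤ K*q := this
        omega
      have hG : Disjoint (Finset.Ioc (K*q+p) (K*q+p+m)) ((Finset.range K).biUnion
          (fun i => Finset.Ioc (i*q+p) (i*q+p+m))) := by
        rw [Finset.disjoint_left]
        intro x hx hx'
        simp only [Finset.mem_biUnion, Finset.mem_range, Finset.mem_Ioc] at hx hx'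
        obtain ⟨i, hiK, h1, h2⟩ := hx'
        have : i*q + q ≤ K*q := by
          have : (i+1)*q ≤ K*q := Nat.mul_le_mul_right q (by omega)
          calc i*q + q = (i+1)*q := by ring
            _ ≤ K*q := this
        omega
      rw [Finset.range_add_one, Finset.biUnion_insert, Finset.biUnion_insert,
        Finset.sum_union hT, Finset.sum_union hG]
      have h1 : 0 ≤ K*q := Nat.zero_le _
      have h2 : K*q ≤ K*q + p := Nat.le_add_right _ _
      have h3 : K*q + p ≤ K*q + p + m := Nat.le_add_right _ _
      have e1 := Finset.sum_Ioc_consecutive (fun i => X i ω) h1 h2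
      have e2 := Finset.sum_Ioc_consecutive (fun i => X i ω) (le_trans h1 h2) h3
      have hKq : K*q + p + m = (K+1)*q := by rw [hq]; ring
      calc ∑ i ∈ Finset.Ioc (K*q) (K*q+p), X i ω
            + ∑ i ∈ (Finset.range K).biUnion (fun i => Finset.Ioc (i*q) (i*q+p)), X i ω
          + (∑ i ∈ Finset.Ioc (K*q+p) (K*q+p+m), X i ω
            + ∑ i ∈ (Finset.range K).biUnion (fun i => Finset.Ioc (i*q+p) (i*q+p+m)), X i ω)
          = (∑ i ∈ Finset.Ioc 0 (K*q), X i ω + ∑ i ∈ Finset.Ioc (K*q) (K*q+p), X i ω)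
            + ∑ i ∈ Finset.Ioc (K*q+p) (K*q+p+m), X i ω := by rw [← ih]; ring
        _ = ∑ i ∈ Finset.Ioc 0 (K*q+p), X i ω + ∑ i ∈ Finset.Ioc (K*q+p) (K*q+p+m), X i ω := by
            rw [e1]
        _ = ∑ i ∈ Finset.Ioc 0 (K*q+p+m), X i ω := e2
        _ = ∑ i ∈ Finset.Ioc 0 ((K+1)*q), X i ω := by rw [hKq]
  have hkqn : k*q ≤ n := by
    rw [hk]
    exact Nat.div_mul_le_self n q
  have hfin := Finset.sum_Ioc_consecutive (fun i => X i ω) (Nat.zero_le (k*q)) hkqn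
  rw [← main k] at hfin
  linarith [hfin]

end Blocks2

section Bounds

variable {Ω : Type}

/-- The four fundamental inequalities comparing `a_n, b_n` with block quantities. -/
lemma main_bounds (ℰ : SLE Ω) (m : ℕ) (X : ℕ → Ω → ℝ)
    (hstat : StationarySeq ℰ X) (hmdep : MDepSeq ℰ m X)
    (hmean : ℰ.E (X 1) = 0) (hmean' : ℰ.e (X 1) = 0)
    (C : ℝ) (hC : 0 ≤ C) (hCa : ∀ j : ℕ, aSeq ℰ X j ≤ C * j)
    (p : ℕ) (hmp : m ≤ p) (hp : 1 ≤ p) (n : ℕ) (t : ℝ) (ht : 0 < t) (ht1 : t ≤ 1) :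
    ((1-t) * (((n/(p+m) : ℕ):ℝ) * aSeq ℰ X p)
        - (1/t-1) * (2*(((n/(p+m) : ℕ):ℝ) * aSeq ℰ X m) + 2*(C*((p:ℝ)+(m:ℝ)))) ≤ aSeq ℰ X n
      ∧ aSeq ℰ X n ≤ (1+t) * (((n/(p+m) : ℕ):ℝ) * aSeq ℰ X p)
        + (1+1/t) * (2*(((n/(p+m) : ℕ):ℝ) * aSeq ℰ X m) + 2*(C*((p:ℝ)+(m:ℝ))))) ∧
    ((1-t) * (((n/(p+m) : ℕ):ℝ) * bSeq ℰ X p)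
        - (1/t-1) * (2*(((n/(p+m) : ℕ):ℝ) * aSeq ℰ X m) + 2*(C*((p:ℝ)+(m:ℝ)))) ≤ bSeq ℰ X n
      ∧ bSeq ℰ X n ≤ (1+t) * (((n/(p+m) : ℕ):ℝ) * bSeq ℰ X p)
        + (1+1/t) * (2*(((n/(p+m) : ℕ):ℝ) * aSeq ℰ X m) + 2*(C*((p:ℝ)+(m:ℝ))))) := by
  classical
  set q := p + m with hq
  set k := n / q with hk
  set U : Ω → ℝ := fun ω => ∑ i ∈ (Finset.range k).biUnion
    (fun i => Finset.Ioc (i*q) (i*q+p)), X i ω with hU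
  set V : Ω → ℝ := fun ω =>
    (∑ i ∈ (Finset.range k).biUnion (fun i => Finset.Ioc (i*q+p) (i*q+p+m)), X i ω)
    + ∑ i ∈ Finset.Ioc (k*q) n, X i ω with hV
  have hS : ∀ ω, ∑ i ∈ Finset.Ioc 0 n, X i ω = U ω + V ω := S_decomp X p m n
  have hUE := T_moment ℰ m X hstat hmdep hmean hmean' p hmp hp k
  have hGE := G_moment ℰ m X hstat hmdep hmean hmean' p hmp hp k
  -- tail bound
  have hq0 : 0 < q := by omega
  have hkqn : k*q ≤ n := by rw [hk]; exact Nat.div_mul_le_self n q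
  have hrn : k*q + (n - k*q) = n := by omega
  have hrlt : n - k*q < q := by
    have h1 := Nat.div_add_mod n q
    have h2 : n % q < q := Nat.mod_lt _ hq0
    have h3 : q * (n/q) = k * q := by rw [hk]; ring
    omega
  have htail : ℰ.E (fun ω => (∑ i ∈ Finset.Ioc (k*q) n, X i ω)^2) = aSeq ℰ X (n - k*q) := by
    have := (stat_sq ℰ X hstat (k*q) (n - k*q)).1
    rw [hrn] at this
    exact this
  have htailC : ℰ.E (fun ω => (∑ i ∈ Finset.Ioc (k*q) n, X i ω)^2) ≤ C * ((p:ℝ)+(m:ℝ)) := by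
    rw [htail]
    calc aSeq ℰ X (n - k*q) ≤ C * ((n - k*q : ℕ):ℝ) := hCa _
      _ ≤ C * ((p:ℝ)+(m:ℝ)) := by
          apply mul_le_mul_of_nonneg_left _ hC
          have : ((n - k*q : ℕ):ℝ) ≤ ((q:ℕ):ℝ) := by
            exact_mod_cast le_of_lt hrlt
          calc ((n - k*q : ℕ):ℝ) ≤ ((q:ℕ):ℝ) := this
            _ = (p:ℝ)+(m:ℝ) := by rw [hq]; push_cast; ring
  -- bound on E[V²]
  have hVE : ℰ.E (fun ω => (V ω)^2) ≤ 2*((k:ℝ) * aSeq ℰ X m) + 2*(C*((p:ℝ)+(m:ℝ))) := by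
    have h1 := E_sq_split_le ℰ
      (fun ω => ∑ i ∈ (Finset.range k).biUnion (fun i => Finset.Ioc (i*q+p) (i*q+p+m)), X i ω)
      (fun ω => ∑ i ∈ Finset.Ioc (k*q) n, X i ω) 1 one_pos
    norm_num at h1
    calc ℰ.E (fun ω => (V ω)^2)
        = ℰ.E (fun ω =>
          ((∑ i ∈ (Finset.range k).biUnion (fun i => Finset.Ioc (i*q+p) (i*q+p+m)), X i ω)
            + ∑ i ∈ Finset.Ioc (k*q) n, X i ω)^2) := E_congr ℰ (fun ω => by rw [hV])
      _ ≤ 2 * ℰ.E (fun ω =>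
            (∑ i ∈ (Finset.range k).biUnion (fun i => Finset.Ioc (i*q+p) (i*q+p+m)), X i ω)^2)
          + 2 * ℰ.E (fun ω => (∑ i ∈ Finset.Ioc (k*q) n, X i ω)^2) := h1
      _ ≤ 2*((k:ℝ) * aSeq ℰ X m) + 2*(C*((p:ℝ)+(m:ℝ))) := by
          rw [hGE]
          linarith [htailC]
  have hVE0 : 0 ≤ ℰ.E (fun ω => (V ω)^2) := E_nonneg ℰ (fun ω => sq_nonneg _)
  have haS : aSeq ℰ X n = ℰ.E (fun ω => (U ω + V ω)^2) :=
    E_congr ℰ (fun ω => by rw [hS ω])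
  have hbS : bSeq ℰ X n = ℰ.e (fun ω => (U ω + V ω)^2) :=
    e_congr ℰ (fun ω => by rw [hS ω])
  have ht1' : 0 ≤ 1 + 1/t := by positivity
  have ht2' : 0 ≤ 1/t - 1 := by
    have : 1 ≤ 1/t := by rw [le_div_iff₀ ht]; linarith
    linarith
  constructor
  · constructor
    · have h := E_sq_split_ge ℰ U V t ht ht1
      rw [hUE.1] at h
      rw [haS]
      have : (1/t-1) * ℰ.E (fun ω => (V ω)^2)
          ≤ (1/t-1) * (2*((k:ℝ) * aSeq ℰ X m) + 2*(C*((p:ℝ)+(m:ℝ)))) :=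
        mul_le_mul_of_nonneg_left hVE ht2'
      linarith
    · have h := E_sq_split_le ℰ U V t ht
      rw [hUE.1] at h
      rw [haS]
      have : (1+1/t) * ℰ.E (fun ω => (V ω)^2)
          ≤ (1+1/t) * (2*((k:ℝ) * aSeq ℰ X m) + 2*(C*((p:ℝ)+(m:ℝ)))) :=
        mul_le_mul_of_nonneg_left hVE ht1'
      linarith
  · constructor
    · have h := e_sq_split_ge ℰ U V t ht ht1
      rw [hUE.2] at h
      rw [hbS]
      have : (1/t-1) * ℰ.E (fun ω => (V ω)^2)
          ≤ (1/t-1) * (2*((k:ℝ) * aSeq ℰ X m) + 2*(C*((p:ℝ)+(m:ℝ)))) :=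
        mul_le_mul_of_nonneg_left hVE ht2'
      linarith
    · have h := e_sq_split_le ℰ U V t ht
      rw [hUE.2] at h
      rw [hbS]
      have : (1+1/t) * ℰ.E (fun ω => (V ω)^2)
          ≤ (1+1/t) * (2*((k:ℝ) * aSeq ℰ X m) + 2*(C*((p:ℝ)+(m:ℝ)))) :=
        mul_le_mul_of_nonneg_left hVE ht1'
      linarith

end Bounds

section Analytic

set_option maxHeartbeats 1600000 in
/-- Abstract convergence lemma: a nonnegative sequence satisfying the block
sandwich inequalities has `f n / n` convergent. -/
lemma seq_converges (f : ℕ → ℝ) (C D : ℝ) (hC : 0 ≤ C) (hD : 0 ≤ D) (m : ℕ)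
    (hf0 : ∀ n, 0 ≤ f n) (hfC : ∀ n : ℕ, f n ≤ C * n)
    (key : ∀ p : ℕ, m ≤ p → 1 ≤ p → ∀ n : ℕ, ∀ t : ℝ, 0 < t → t ≤ 1 →
      (1-t) * (((n/(p+m) : ℕ):ℝ) * f p)
          - (1/t-1) * (2*(((n/(p+m) : ℕ):ℝ) * D) + 2*(C*((p:ℝ)+(m:ℝ)))) ≤ f n ∧
      f n ≤ (1+t) * (((n/(p+m) : ℕ):ℝ) * f p)
          + (1+1/t) * (2*(((n/(p+m) : ℕ):ℝ) * D) + 2*(C*((p:ℝ)+(m:ℝ))))) :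
    ∃ L : ℝ, 0 ≤ L ∧ Filter.Tendsto (fun n : ℕ => f n / n) Filter.atTop (nhds L) := by
  have hmain : ∀ ε : ℝ, 0 < ε → ∃ x : ℝ, ∃ N : ℕ, ∀ n : ℕ, N ≤ n → |f n / n - x| ≤ ε := by
    intro ε hε
    -- choose t
    obtain ⟨t, ht, ht1, htC⟩ : ∃ t : ℝ, 0 < t ∧ t ≤ 1 ∧ t * C ≤ ε/6 := by
      have hC1 : (0:ℝ) < C + 1 := by linarith
      refine ⟨min 1 (ε/6/(C+1)), lt_min one_pos (by positivity), min_le_left _ _, ?_⟩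
      have htE : min 1 (ε/6/(C+1)) ≤ ε/6/(C+1) := min_le_right _ _
      have h1 : (min 1 (ε/6/(C+1))) * (C+1) ≤ (ε/6/(C+1)) * (C+1) :=
        mul_le_mul_of_nonneg_right htE (by linarith)
      have h2 : (ε/6/(C+1)) * (C+1) = ε/6 := div_mul_cancel₀ _ (ne_of_gt hC1)
      have h3 : (0:ℝ) < min 1 (ε/6/(C+1)) := lt_min one_pos (by positivity)
      nlinarith
    -- choose p
    obtain ⟨p, hmp, hp1, hED⟩ : ∃ p : ℕ, m ≤ p ∧ 1 ≤ p ∧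
        4*D ≤ (ε/6)*t*((p:ℝ)+(m:ℝ)) := by
      refine ⟨max (max m 1) (⌈24*(D+1)/(t*ε)⌉₊),
        le_trans (le_max_left m 1) (le_max_left _ _),
        le_trans (le_max_right m 1) (le_max_left _ _), ?_⟩
      set p := max (max m 1) (⌈24*(D+1)/(t*ε)⌉₊) with hpdef
      have hpD : 24*(D+1)/(t*ε) ≤ (p:ℝ) := by
        calc 24*(D+1)/(t*ε) ≤ (⌈24*(D+1)/(t*ε)⌉₊ : ℝ) := Nat.le_ceil _
          _ ≤ (p:ℝ) := by exact_mod_cast le_max_right (max m 1) _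
      have hm0 : (0:ℝ) ≤ (m:ℝ) := Nat.cast_nonneg m
      have h1 : 24*(D+1) ≤ (p:ℝ)*(t*ε) := (div_le_iff₀ (by positivity)).mp hpD
      nlinarith [mul_pos ht hε]
    set Q : ℝ := (p:ℝ) + (m:ℝ) with hQdef
    have hm0 : (0:ℝ) ≤ (m:ℝ) := Nat.cast_nonneg m
    have hp0 : (1:ℝ) ≤ (p:ℝ) := by exact_mod_cast hp1
    have hQ0 : 0 < Q := by rw [hQdef]; linarith
    have hpQ : (p:ℝ) ≤ Q := by rw [hQdef]; linarith
    -- choose N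
    obtain ⟨N, hN1, hNbig⟩ : ∃ N : ℕ, 1 ≤ N ∧
        ∀ n : ℕ, N ≤ n → 24*(C*Q+1) ≤ (n:ℝ)*(t*ε) := by
      refine ⟨max 1 (⌈24*(C*Q+1)/(t*ε)⌉₊), le_max_left _ _, ?_⟩
      intro n hn
      have hnD : 24*(C*Q+1)/(t*ε) ≤ (n:ℝ) := by
        calc 24*(C*Q+1)/(t*ε) ≤ (⌈24*(C*Q+1)/(t*ε)⌉₊ : ℝ) := Nat.le_ceil _
          _ ≤ ((max 1 (⌈24*(C*Q+1)/(t*ε)⌉₊) : ℕ):ℝ) := by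
              exact_mod_cast le_max_right 1 _
          _ ≤ (n:ℝ) := by exact_mod_cast hn
      exact (div_le_iff₀ (by positivity)).mp hnD
    set xp : ℝ := f p / Q with hxpdef
    refine ⟨xp, N, ?_⟩
    intro n hn
    have hn1 : 1 ≤ n := le_trans hN1 hn
    have hnpos : (0:ℝ) < (n:ℝ) := by exact_mod_cast Nat.lt_of_lt_of_le Nat.zero_lt_one hn1
    have hG5 : 4*(C*Q) ≤ (ε/6)*t*(n:ℝ) := by
      have h1 := hNbig n hn
      nlinarith
    -- block count facts
    set kR : ℝ := ((n/(p+m) : ℕ):ℝ) with hkRdef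
    have hk0 : 0 ≤ kR := Nat.cast_nonneg _
    have hkq : kR * Q ≤ (n:ℝ) := by
      have h1 : (n/(p+m)) * (p+m) ≤ n := Nat.div_mul_le_self n (p+m)
      have h2 : (((n/(p+m)) * (p+m) : ℕ):ℝ) ≤ (n:ℝ) := by exact_mod_cast h1
      push_cast at h2
      rw [hkRdef, hQdef]
      linarith
    have hkq2 : (n:ℝ) < (kR + 1) * Q := by
      have h1 : ((p+m) * (n/(p+m)) + n % (p+m) : ℕ) = n := Nat.div_add_mod n (p+m)
      have h2 : n % (p+m) < p + m := Nat.mod_lt _ (by omega)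
      have h4 : (((p+m) * (n/(p+m)) + n % (p+m) : ℕ):ℝ) = (n:ℝ) := by exact_mod_cast h1
      push_cast at h4
      have h5 : ((n % (p+m) : ℕ):ℝ) < Q := by
        rw [hQdef]; exact_mod_cast h2
      rw [hkRdef, hQdef]
      push_cast
      nlinarith [h4, h5]
    have hfp0 : 0 ≤ f p := hf0 p
    have hfpQ : f p ≤ C * Q := by
      calc f p ≤ C * p := hfC p
        _ ≤ C * Q := mul_le_mul_of_nonneg_left hpQ hC
    have hxpC : xp ≤ C := by
      rw [hxpdef, div_le_iff₀ hQ0]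
      nlinarith
    have hxp0 : 0 ≤ xp := by rw [hxpdef]; positivity
    have hxpQ : xp * Q = f p := by
      rw [hxpdef]; exact div_mul_cancel₀ (f p) (ne_of_gt hQ0)
    -- key inequalities
    obtain ⟨hlow, hup⟩ := key p hmp hp1 n t ht ht1
    rw [← hkRdef, ← hQdef] at hlow hup
    set s : ℝ := 1/t with hsdef
    have hs0 : 0 < s := by rw [hsdef]; positivity
    have hst : t * s = 1 := by rw [hsdef]; field_simp
    have hs1 : 1 ≤ s := by rw [hsdef, le_div_iff₀ ht]; linarith
    set XX : ℝ := 2*(kR*D) + 2*(C*Q) with hXXdef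
    have hXX0 : 0 ≤ XX := by
      rw [hXXdef]
      have := mul_nonneg hk0 hD
      have := mul_nonneg hC hQ0.le
      linarith
    clear_value s XX
    -- main sandwich facts
    have hF1 : kR * f p ≤ (n:ℝ) * xp := by
      calc kR * f p = kR * (xp * Q) := by rw [hxpQ]
        _ = (kR * Q) * xp := by ring
        _ ≤ (n:ℝ) * xp := mul_le_mul_of_nonneg_right hkq hxp0
    have hF2 : (n:ℝ) * xp - C*Q ≤ kR * f p := by
      have h1 : (n:ℝ) * xp ≤ ((kR + 1) * Q) * xp := mul_le_mul_of_nonneg_right hkq2.le hxp0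
      have h2 : ((kR + 1) * Q) * xp = kR * (xp * Q) + xp * Q := by ring
      rw [hxpQ] at h2
      nlinarith [hfpQ]
    have hF4 : t * xp ≤ ε/6 := by
      have h1 : t * xp ≤ t * C := mul_le_mul_of_nonneg_left hxpC ht.le
      linarith
    have hG6 : 4*(kR*D) ≤ (ε/6)*t*(n:ℝ) := by
      have hA : kR*(4*D) ≤ kR*((ε/6)*t*Q) := mul_le_mul_of_nonneg_left hED hk0
      have hB : ((ε/6)*t)*(kR*Q) ≤ ((ε/6)*t)*(n:ℝ) :=
        mul_le_mul_of_nonneg_left hkq (by positivity)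
      calc 4*(kR*D) = kR*(4*D) := by ring
        _ ≤ kR*((ε/6)*t*Q) := hA
        _ = ((ε/6)*t)*(kR*Q) := by ring
        _ ≤ ((ε/6)*t)*(n:ℝ) := hB
        _ = (ε/6)*t*(n:ℝ) := by ring
    -- error bounds
    have hP2 : s*(4*(kR*D)) ≤ (ε/6)*(n:ℝ) := by
      have h1 : s*(4*(kR*D)) ≤ s*((ε/6)*t*(n:ℝ)) := mul_le_mul_of_nonneg_left hG6 hs0.le
      have h2 : s*((ε/6)*t*(n:ℝ)) = (ε/6)*(n:ℝ)*(t*s) := by ring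
      rw [h2, hst, mul_one] at h1
      exact h1
    have hP3 : s*(4*(C*Q)) ≤ (ε/6)*(n:ℝ) := by
      have h1 : s*(4*(C*Q)) ≤ s*((ε/6)*t*(n:ℝ)) := mul_le_mul_of_nonneg_left hG5 hs0.le
      have h2 : s*((ε/6)*t*(n:ℝ)) = (ε/6)*(n:ℝ)*(t*s) := by ring
      rw [h2, hst, mul_one] at h1
      exact h1
    have hP1 : t*(kR*f p) ≤ (ε/6)*(n:ℝ) := by
      have h1 : t*(kR*f p) ≤ t*((n:ℝ)*xp) := mul_le_mul_of_nonneg_left hF1 ht.le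
      have h2 : t*((n:ℝ)*xp) = (n:ℝ)*(t*xp) := by ring
      have h3 : (n:ℝ)*(t*xp) ≤ (n:ℝ)*(ε/6) := mul_le_mul_of_nonneg_left hF4 hnpos.le
      nlinarith
    have hXbound : (1+s)*XX ≤ (ε/6)*(n:ℝ) + (ε/6)*(n:ℝ) := by
      have h0 : XX ≤ s*XX := by nlinarith [mul_nonneg (sub_nonneg.mpr hs1) hXX0]
      have h1 : (1+s)*XX = XX + s*XX := by ring
      have h2 : s*XX + s*XX = s*(4*(kR*D)) + s*(4*(C*Q)) := by rw [hXXdef]; ring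
      calc (1+s)*XX = XX + s*XX := h1
        _ ≤ s*XX + s*XX := by linarith
        _ = s*(4*(kR*D)) + s*(4*(C*Q)) := h2
        _ ≤ (ε/6)*(n:ℝ) + (ε/6)*(n:ℝ) := add_le_add hP2 hP3
    have hCQP : C*Q ≤ (ε/6)*(n:ℝ) := by
      have h1 : (ε/6)*t*(n:ℝ) ≤ (ε/6)*(n:ℝ) := by nlinarith
      have h2 : 0 ≤ C*Q := mul_nonneg hC hQ0.le
      nlinarith
    -- upper bound
    have hup2 : f n ≤ (n:ℝ)*xp + (ε/2)*(n:ℝ) := by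
      have hsplit : (1+t)*(kR*f p) = kR*f p + t*(kR*f p) := by ring
      linarith
    -- lower bound
    have hlow2 : (n:ℝ)*xp - (2*ε/3)*(n:ℝ) ≤ f n := by
      have h1 : (1-t)*((n:ℝ)*xp - C*Q) ≤ (1-t)*(kR*f p) :=
        mul_le_mul_of_nonneg_left hF2 (by linarith)
      have h2 : (1-t)*((n:ℝ)*xp - C*Q)
          = (n:ℝ)*xp - (n:ℝ)*(t*xp) - C*Q + t*(C*Q) := by ring
      have h3 : (n:ℝ)*(t*xp) ≤ (n:ℝ)*(ε/6) := mul_le_mul_of_nonneg_left hF4 hnpos.le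
      have h4 : 0 ≤ t*(C*Q) := mul_nonneg ht.le (mul_nonneg hC hQ0.le)
      have h5 : (s-1)*XX ≤ (1+s)*XX := by nlinarith [hXX0]
      nlinarith [hlow, hXbound, hCQP]
    refine abs_le.mpr ⟨?_, ?_⟩
    · have hh : xp - 2*ε/3 ≤ f n / n := by
        rw [le_div_iff₀ hnpos]
        nlinarith [hlow2]
      linarith
    · have hh : f n / n ≤ xp + ε/2 := by
        rw [div_le_iff₀ hnpos]
        nlinarith [hup2]
      linarith
  -- Cauchy sequence, hence convergent
  have hcauchy : CauchySeq (fun n : ℕ => f n / n) := by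
    rw [Metric.cauchySeq_iff']
    intro ε hε
    obtain ⟨x, N, hN⟩ := hmain (ε/3) (by linarith)
    refine ⟨N, fun n hn => ?_⟩
    have h1 := hN n hn
    have h2 := hN N le_rfl
    rw [Real.dist_eq]
    have h3 : |f n / (n:ℝ) - f N / (N:ℝ)|
        ≤ |f n / (n:ℝ) - x| + |f N / (N:ℝ) - x| := by
      calc |f n / (n:ℝ) - f N / (N:ℝ)|
          = |(f n / (n:ℝ) - x) + (x - f N / (N:ℝ))| := by congr 1; ring
        _ ≤ |f n / (n:ℝ) - x| + |x - f N / (N:ℝ)| := abs_add_le _ _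
        _ = |f n / (n:ℝ) - x| + |f N / (N:ℝ) - x| := by rw [abs_sub_comm x _]
    linarith
  obtain ⟨L, hL⟩ := cauchySeq_tendsto_of_complete hcauchy
  refine ⟨L, ?_, hL⟩
  have : ∀ n : ℕ, 0 ≤ f n / n := fun n => div_nonneg (hf0 n) (Nat.cast_nonneg n)
  exact ge_of_tendsto' hL this

end Analytic

/-- for a stationary `m`-dependent sequence with
`E[X_1] = e[X_1] = 0`, finite second moment and `E[(X_1² - c)⁺] → 0` as `c → ∞`,
there exist `0 ≤ σ̲² ≤ σ̄² < ∞` with `E[S_n²]/n → σ̄²` and `e[S_n²]/n → σ̲²`. -/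
theorem stmt_15 {Ω : Type} (ℰ : SLE Ω) (m : ℕ) (X : ℕ → Ω → ℝ)
    (hstat : StationarySeq ℰ X) (hmdep : MDepSeq ℰ m X)
    (hmean : ℰ.E (X 1) = 0) (hmean' : ℰ.e (X 1) = 0)
    (hUI : Filter.Tendsto (fun c : ℝ => ℰ.E (fun ω => max ((X 1 ω) ^ 2 - c) 0))
      Filter.atTop (nhds 0)) :
    ∃ lσ2 uσ2 : ℝ, 0 ≤ lσ2 ∧ lσ2 ≤ uσ2 ∧
      Filter.Tendsto
        (fun n : ℕ => ℰ.E (fun ω => (∑ k ∈ Finset.Icc 1 n, X k ω) ^ 2) / n)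
        Filter.atTop (nhds uσ2) ∧
      Filter.Tendsto
        (fun n : ℕ => ℰ.e (fun ω => (∑ k ∈ Finset.Icc 1 n, X k ω) ^ 2) / n)
        Filter.atTop (nhds lσ2) := by
  classical
  have hIcc : ∀ n : ℕ, Finset.Icc 1 n = Finset.Ioc 0 n := fun n => by
    ext x; simp only [Finset.mem_Icc, Finset.mem_Ioc]; omega
  set C : ℝ := ((m:ℝ)+1)^2 * aSeq ℰ X 1 with hCdef
  have hC : 0 ≤ C := by
    rw [hCdef]; exact mul_nonneg (by positivity) (aSeq_nonneg ℰ X 1)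
  have hCa : ∀ j : ℕ, aSeq ℰ X j ≤ C * j := fun j => by
    have h := aSeq_linear ℰ m X hstat hmdep hmean hmean' j
    rw [hCdef]
    linarith
  have hbCa : ∀ j : ℕ, bSeq ℰ X j ≤ C * j := fun j =>
    le_trans (bSeq_le_aSeq ℰ X j) (hCa j)
  have hD : 0 ≤ aSeq ℰ X m := aSeq_nonneg ℰ X m
  have keyA : ∀ p : ℕ, m ≤ p → 1 ≤ p → ∀ n : ℕ, ∀ t : ℝ, 0 < t → t ≤ 1 →
      (1-t) * (((n/(p+m) : ℕ):ℝ) * aSeq ℰ X p)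
          - (1/t-1) * (2*(((n/(p+m) : ℕ):ℝ) * aSeq ℰ X m) + 2*(C*((p:ℝ)+(m:ℝ)))) ≤ aSeq ℰ X n ∧
      aSeq ℰ X n ≤ (1+t) * (((n/(p+m) : ℕ):ℝ) * aSeq ℰ X p)
          + (1+1/t) * (2*(((n/(p+m) : ℕ):ℝ) * aSeq ℰ X m) + 2*(C*((p:ℝ)+(m:ℝ)))) :=
    fun p hmp hp n t ht ht1 =>
      (main_bounds ℰ m X hstat hmdep hmean hmean' C hC hCa p hmp hp n t ht ht1).1
  have keyB : ∀ p : ℕ, m ≤ p → 1 ≤ p → ∀ n : ℕ, ∀ t : ℝ, 0 < t → t ≤ 1 →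
      (1-t) * (((n/(p+m) : ℕ):ℝ) * bSeq ℰ X p)
          - (1/t-1) * (2*(((n/(p+m) : ℕ):ℝ) * aSeq ℰ X m) + 2*(C*((p:ℝ)+(m:ℝ)))) ≤ bSeq ℰ X n ∧
      bSeq ℰ X n ≤ (1+t) * (((n/(p+m) : ℕ):ℝ) * bSeq ℰ X p)
          + (1+1/t) * (2*(((n/(p+m) : ℕ):ℝ) * aSeq ℰ X m) + 2*(C*((p:ℝ)+(m:ℝ)))) :=
    fun p hmp hp n t ht ht1 =>
      (main_bounds ℰ m X hstat hmdep hmean hmean' C hC hCa p hmp hp n t ht ht1).2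
  obtain ⟨ua, hua0, huaT⟩ := seq_converges (fun n => aSeq ℰ X n) C (aSeq ℰ X m)
    hC hD m (fun n => aSeq_nonneg ℰ X n) (fun n => hCa n) keyA
  obtain ⟨lb, hlb0, hlbT⟩ := seq_converges (fun n => bSeq ℰ X n) C (aSeq ℰ X m)
    hC hD m (fun n => bSeq_nonneg ℰ X n) (fun n => hbCa n) keyB
  have hle : lb ≤ ua := by
    apply le_of_tendsto_of_tendsto' hlbT huaT
    intro n
    rcases Nat.eq_zero_or_pos n with h | h
    · subst h; simp
    · have hn : (0:ℝ) < (n:ℝ) := by exact_mod_cast h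
      exact div_le_div_of_nonneg_right (bSeq_le_aSeq ℰ X n) hn.le
  refine ⟨lb, ua, hlb0, hle, ?_, ?_⟩
  · have : (fun n : ℕ => ℰ.E (fun ω => (∑ k ∈ Finset.Icc 1 n, X k ω) ^ 2) / n)
        = (fun n : ℕ => aSeq ℰ X n / n) := by
      funext n
      rw [hIcc n]
      rfl
    rw [this]
    exact huaT
  · have : (fun n : ℕ => ℰ.e (fun ω => (∑ k ∈ Finset.Icc 1 n, X k ω) ^ 2) / n)
        = (fun n : ℕ => bSeq ℰ X n / n) := by
      funext n
      rw [hIcc n]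
      rfl
    rw [this]
    exact hlbT
end

section
/- Let p_n, m be positive integers, and let H_1, ..., H_h be blocks of indices each of cardinality at most p_n. For a sub-linear expectation E with B_n > 0, if (p_n/B_n²) Σ_{j} E[(X_j² - ε²B_n²/p_n²)⁺] → 0 for all ε > 0 (sum over all indices), then with Y_i = Σ_{j∈H_i} X_j we have (1/B_n²) Σ_{i=1}^h E[(Y_i² - ε²B_n²)⁺] → 0 for all ε > 0. -/
open Filter Finset

lemma SLE.nonneg' {Ω : Type*} (ℰ : SLE Ω) {X : Ω → ℝ} (hX : ∀ ω, 0 ≤ X ω) :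
    0 ≤ ℰ.E X := by
  have := ℰ.mono (fun _ => (0:ℝ)) X hX
  rwa [ℰ.const] at this

lemma SLE.sum_le' {Ω : Type*} {ι : Type*} (ℰ : SLE Ω) (s : Finset ι) (f : ι → Ω → ℝ) :
    ℰ.E (fun ω => ∑ j ∈ s, f j ω) ≤ ∑ j ∈ s, ℰ.E (f j) := by
  classical
  induction s using Finset.cons_induction with
  | empty => simp [ℰ.const]
  | cons a s ha ih =>
      simp only [Finset.sum_cons]
      calc ℰ.E (fun ω => f a ω + ∑ j ∈ s, f j ω)
          ≤ ℰ.E (f a) + ℰ.E (fun ω => ∑ j ∈ s, f j ω) := ℰ.subadd _ _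
        _ ≤ ℰ.E (f a) + ∑ j ∈ s, ℰ.E (f j) := by linarith

lemma SLE.mul' {Ω : Type*} (ℰ : SLE Ω) (l : ℝ) (hl : 0 ≤ l) (X : Ω → ℝ) :
    ℰ.E (fun ω => l * X ω) = l * ℰ.E X := ℰ.homog l X hl

/-- Lindeberg condition transfers from the individual variables to the
block sums `Y_i = Σ_{j∈H_i} X_j`, when each block has at most `p_n` elements. -/
theorem stmt_17 {Ω : Type} (ℰ : SLE Ω) (kn : ℕ → ℕ) (X : ℕ → ℕ → Ω → ℝ)
    (p : ℕ → ℕ) (hp : ∀ n, 0 < p n) (B : ℕ → ℝ) (hB : ∀ n, 0 < B n)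
    (h : ℕ → ℕ) (H : (n : ℕ) → Fin (h n) → Finset ℕ)
    (hsub : ∀ n i, H n i ⊆ Finset.Icc 1 (kn n))
    (hdisj : ∀ n, ∀ i j : Fin (h n), i ≠ j → Disjoint (H n i) (H n j))
    (hcard : ∀ n i, (H n i).card ≤ p n)
    (hLind : ∀ ε : ℝ, 0 < ε → Filter.Tendsto
      (fun n => ((p n : ℝ) / (B n) ^ 2) * ∑ j ∈ Finset.Icc 1 (kn n),
        ℰ.E (fun ω => max ((X n j ω) ^ 2 - ε ^ 2 * (B n) ^ 2 / (p n : ℝ) ^ 2) 0))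
      Filter.atTop (nhds 0)) :
    ∀ ε : ℝ, 0 < ε → Filter.Tendsto
      (fun n => (1 / (B n) ^ 2) * ∑ i : Fin (h n),
        ℰ.E (fun ω => max ((∑ j ∈ H n i, X n j ω) ^ 2 - ε ^ 2 * (B n) ^ 2) 0))
      Filter.atTop (nhds 0) := by
  intro ε hε
  have Enonneg : ∀ (X : Ω → ℝ) (c : ℝ), 0 ≤ ℰ.E (fun ω => max (X ω - c) 0) :=
    fun Y c => ℰ.nonneg' fun ω => le_max_right _ _
  refine tendsto_of_tendsto_of_tendsto_of_le_of_le tendsto_const_nhds (hLind ε hε) ?_ ?_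
  · intro n
    apply mul_nonneg (by positivity)
    exact Finset.sum_nonneg fun i _ => ℰ.nonneg' fun ω => le_max_right _ _
  · intro n
    have hpn : (0:ℝ) < (p n : ℝ) := by exact_mod_cast hp n
    set c : ℝ := ε ^ 2 * (B n) ^ 2 with hc
    set g : ℕ → ℝ := fun j =>
      ℰ.E (fun ω => max ((X n j ω) ^ 2 - c / (p n : ℝ) ^ 2) 0) with hg
    have hgnn : ∀ j, 0 ≤ g j := fun j => ℰ.nonneg' fun ω => le_max_right _ _
    -- per-block estimate
    have stepA : ∀ i : Fin (h n),
        ℰ.E (fun ω => max ((∑ j ∈ H n i, X n j ω) ^ 2 - c) 0)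
          ≤ ∑ j ∈ H n i, (p n : ℝ) * g j := by
      intro i
      have hcardle : ((H n i).card : ℝ) ≤ (p n : ℝ) := by exact_mod_cast hcard n i
      have ptwise : ∀ ω, max ((∑ j ∈ H n i, X n j ω) ^ 2 - c) 0
          ≤ ∑ j ∈ H n i, (p n : ℝ) * max ((X n j ω) ^ 2 - c / (p n : ℝ) ^ 2) 0 := by
        intro ω
        have hRnn : 0 ≤ ∑ j ∈ H n i, (p n : ℝ) * max ((X n j ω) ^ 2 - c / (p n : ℝ) ^ 2) 0 :=
          Finset.sum_nonneg fun j _ => mul_nonneg hpn.le (le_max_right _ _)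
        apply max_le _ hRnn
        have h1 : (∑ j ∈ H n i, X n j ω) ^ 2
            ≤ ((H n i).card : ℝ) * ∑ j ∈ H n i, (X n j ω) ^ 2 :=
          sq_sum_le_card_mul_sum_sq
        have h2 : ∑ j ∈ H n i, (p n : ℝ) * ((X n j ω) ^ 2 - c / (p n : ℝ) ^ 2)
            ≤ ∑ j ∈ H n i, (p n : ℝ) * max ((X n j ω) ^ 2 - c / (p n : ℝ) ^ 2) 0 :=
          Finset.sum_le_sum fun j _ =>
            mul_le_mul_of_nonneg_left (le_max_left _ _) hpn.le
        have h3 : ∑ j ∈ H n i, (p n : ℝ) * ((X n j ω) ^ 2 - c / (p n : ℝ) ^ 2)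
            = (p n : ℝ) * (∑ j ∈ H n i, (X n j ω) ^ 2)
              - ((H n i).card : ℝ) * ((p n : ℝ) * (c / (p n : ℝ) ^ 2)) := by
          simp only [mul_sub, Finset.sum_sub_distrib, ← Finset.mul_sum,
            Finset.sum_const, nsmul_eq_mul]
          ring
        have h4 : ((H n i).card : ℝ) * ((p n : ℝ) * (c / (p n : ℝ) ^ 2)) ≤ c := by
          have hcnn : 0 ≤ c := by positivity
          have : (p n : ℝ) * (c / (p n : ℝ) ^ 2) = c / (p n : ℝ) := by
            field_simp
          rw [this]
          rw [div_eq_mul_inv]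
          calc ((H n i).card : ℝ) * (c * (p n : ℝ)⁻¹)
              ≤ (p n : ℝ) * (c * (p n : ℝ)⁻¹) := by
                apply mul_le_mul_of_nonneg_right hcardle; positivity
            _ = c := by field_simp
        have h5 : ((H n i).card : ℝ) * ∑ j ∈ H n i, (X n j ω) ^ 2
            ≤ (p n : ℝ) * ∑ j ∈ H n i, (X n j ω) ^ 2 := by
          apply mul_le_mul_of_nonneg_right hcardle
          exact Finset.sum_nonneg fun j _ => sq_nonneg _
        linarith
      calc ℰ.E (fun ω => max ((∑ j ∈ H n i, X n j ω) ^ 2 - c) 0)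
          ≤ ℰ.E (fun ω => ∑ j ∈ H n i,
              (p n : ℝ) * max ((X n j ω) ^ 2 - c / (p n : ℝ) ^ 2) 0) :=
            ℰ.mono _ _ ptwise
        _ ≤ ∑ j ∈ H n i, ℰ.E (fun ω =>
              (p n : ℝ) * max ((X n j ω) ^ 2 - c / (p n : ℝ) ^ 2) 0) :=
            ℰ.sum_le' _ _
        _ = ∑ j ∈ H n i, (p n : ℝ) * g j :=
            Finset.sum_congr rfl fun j _ => ℰ.mul' _ hpn.le _
    -- sum over blocks
    have hpdisj : (↑(Finset.univ : Finset (Fin (h n))) : Set (Fin (h n))).PairwiseDisjoint (H n) :=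
      fun i _ j _ hij => hdisj n i j hij
    have stepB : ∑ i : Fin (h n), ∑ j ∈ H n i, (p n : ℝ) * g j
        ≤ ∑ j ∈ Finset.Icc 1 (kn n), (p n : ℝ) * g j := by
      rw [← Finset.sum_biUnion hpdisj]
      apply Finset.sum_le_sum_of_subset_of_nonneg
      · intro j hj
        obtain ⟨i, _, hji⟩ := Finset.mem_biUnion.mp hj
        exact hsub n i hji
      · intro j _ _
        exact mul_nonneg hpn.le (hgnn j)
    have main : ∑ i : Fin (h n),
        ℰ.E (fun ω => max ((∑ j ∈ H n i, X n j ω) ^ 2 - c) 0)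
          ≤ (p n : ℝ) * ∑ j ∈ Finset.Icc 1 (kn n), g j := by
      calc ∑ i : Fin (h n), ℰ.E (fun ω => max ((∑ j ∈ H n i, X n j ω) ^ 2 - c) 0)
          ≤ ∑ i : Fin (h n), ∑ j ∈ H n i, (p n : ℝ) * g j :=
            Finset.sum_le_sum fun i _ => stepA i
        _ ≤ ∑ j ∈ Finset.Icc 1 (kn n), (p n : ℝ) * g j := stepB
        _ = (p n : ℝ) * ∑ j ∈ Finset.Icc 1 (kn n), g j := by rw [Finset.mul_sum]
    have hB2 : (0:ℝ) < (B n) ^ 2 := pow_pos (hB n) 2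
    simp only [hc, hg] at main
    show (1 / (B n) ^ 2) * ∑ i : Fin (h n),
        ℰ.E (fun ω => max ((∑ j ∈ H n i, X n j ω) ^ 2 - ε ^ 2 * (B n) ^ 2) 0)
      ≤ ((p n : ℝ) / (B n) ^ 2) * ∑ j ∈ Finset.Icc 1 (kn n),
        ℰ.E (fun ω => max ((X n j ω) ^ 2 - ε ^ 2 * (B n) ^ 2 / (p n : ℝ) ^ 2) 0)
    have heq : ((p n : ℝ) / (B n) ^ 2) * ∑ j ∈ Finset.Icc 1 (kn n),
        ℰ.E (fun ω => max ((X n j ω) ^ 2 - ε ^ 2 * (B n) ^ 2 / (p n : ℝ) ^ 2) 0)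
      = (1 / (B n) ^ 2) * ((p n : ℝ) * ∑ j ∈ Finset.Icc 1 (kn n),
        ℰ.E (fun ω => max ((X n j ω) ^ 2 - ε ^ 2 * (B n) ^ 2 / (p n : ℝ) ^ 2) 0)) := by ring
    rw [heq]
    exact mul_le_mul_of_nonneg_left main (by positivity)
end
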